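/- arXiv:1611.08662 — 8 statements merged into one kernel-verified Lean document; each statement's English description precedes it below -/
import Mathlib

section
/- There exists a 6-dimensional solvable real Lie algebra 𝔤 that is not nilpotent, together with an invariant nondegenerate symmetric bilinear form ⟨·,·⟩ of signature (4,2), such that the Killing form of 𝔤 vanishes identically and the nilradical of 𝔤 has dimension 5. -/
def L6 : Type := Fin 6 → ℝ

instance : AddCommGroup L6 := inferInstanceAs (AddCommGroup (Fin 6 → ℝ))
noncomputable instance : Module ℝ L6 := inferInstanceAs (Module ℝ (Fin 6 → ℝ))

namespace L6

def br (x y : L6) : L6 := fun i =>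
  match i with
  | 0 => 0
  | 1 => -(x 0 * y 2 - y 0 * x 2)
  | 2 => x 0 * y 1 - y 0 * x 1
  | 3 => x 0 * y 4 - y 0 * x 4
  | 4 => x 0 * y 3 - y 0 * x 3
  | 5 => x 1 * y 2 - x 2 * y 1 - (x 3 * y 4 - x 4 * y 3)

@[simp] lemma add_apply (x y : L6) (i : Fin 6) : (x + y) i = x i + y i := rfl
@[simp] lemma smul_apply (c : ℝ) (x : L6) (i : Fin 6) : (c • x) i = c * x i := rfl
@[simp] lemma zero_apply (i : Fin 6) : (0 : L6) i = 0 := rfl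

lemma ext_iff {x y : L6} : x = y ↔ ∀ i, x i = y i := funext_iff

instance : LieRing L6 where
  bracket := br
  add_lie x y z := by funext i; fin_cases i <;> simp [br] <;> ring
  lie_add x y z := by funext i; fin_cases i <;> simp [br] <;> ring
  lie_self x := by funext i; fin_cases i <;> simp [br] <;> ring
  leibniz_lie x y z := by funext i; fin_cases i <;> simp [br] <;> ring

@[simp] lemma lie_apply (x y : L6) (i : Fin 6) : ⁅x, y⁆ i = br x y i := rfl

noncomputable instance : LieAlgebra ℝ L6 where
  lie_smul c x y := by funext i; fin_cases i <;> simp [br] <;> ring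

end L6
namespace L6

noncomputable def B : LinearMap.BilinForm ℝ L6 :=
  LinearMap.mk₂ ℝ
    (fun x y => x 1 * y 1 + x 2 * y 2 + x 3 * y 3 - x 4 * y 4 + x 0 * y 5 + x 5 * y 0)
    (fun x x' y => by simp; ring)
    (fun c x y => by simp; ring)
    (fun x y y' => by simp; ring)
    (fun c x y => by simp; ring)

@[simp] lemma B_apply (x y : L6) :
    B x y = x 1 * y 1 + x 2 * y 2 + x 3 * y 3 - x 4 * y 4 + x 0 * y 5 + x 5 * y 0 := rfl

lemma B_symm (x y : L6) : B x y = B y x := by simp; ring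

/-- standard basis vectors -/
def e (i : Fin 6) : L6 := fun j => if i = j then 1 else 0

lemma B_nondegenerate : B.Nondegenerate := by
  constructor
  all_goals
  intro x hx
  funext i
  have h0 := hx (e 5); have h1 := hx (e 1); have h2 := hx (e 2)
  have h3 := hx (e 3); have h4 := hx (e 4); have h5 := hx (e 0)
  simp [e] at h0 h1 h2 h3 h4 h5
  fin_cases i <;> simpa using by assumption

lemma B_invariant (x y z : L6) : B ⁅x, y⁆ z = - B y ⁅x, z⁆ := by
  simp [br]; ring

end L6
namespace L6

noncomputable def fmap : L6 →ₗ[ℝ] L6 where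
  toFun x := fun i => match i with
    | 0 => x 3 + x 5
    | 1 => x 0
    | 2 => x 1
    | 3 => x 2
    | 4 => x 4
    | 5 => x 3 / 2 - x 5 / 2
  map_add' x y := by funext i; fin_cases i <;> simp <;> erw [Pi.add_apply] <;> ring
  map_smul' c x := by funext i; fin_cases i <;> simp <;> erw [Pi.smul_apply] <;> simp <;> ring

noncomputable def gmap : L6 →ₗ[ℝ] L6 where
  toFun y := fun i => match i with
    | 0 => y 1
    | 1 => y 2
    | 2 => y 3
    | 3 => y 0 / 2 + y 5
    | 4 => y 4
    | 5 => y 0 / 2 - y 5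
  map_add' x y := by funext i; fin_cases i <;> simp <;> erw [Pi.add_apply] <;> ring
  map_smul' c x := by funext i; fin_cases i <;> simp <;> erw [Pi.smul_apply] <;> simp <;> ring

noncomputable def eqv : L6 ≃ₗ[ℝ] L6 :=
  LinearEquiv.ofLinear fmap gmap
    (by ext x; rw [LinearMap.comp_apply]; rw [LinearMap.id_apply]; funext i
        fin_cases i <;> simp [fmap, gmap] <;> erw [LinearMap.coe_mk, AddHom.coe_mk, LinearMap.coe_mk, AddHom.coe_mk] <;> ring)
    (by ext x; rw [LinearMap.comp_apply]; rw [LinearMap.id_apply]; funext i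
        fin_cases i <;> simp [fmap, gmap] <;> erw [LinearMap.coe_mk, AddHom.coe_mk, LinearMap.coe_mk, AddHom.coe_mk] <;> ring)

noncomputable def bb0 : Module.Basis (Fin 6) ℝ L6 := Pi.basisFun ℝ (Fin 6)

lemma bb0_apply (i : Fin 6) : bb0 i = (Pi.single i 1 : Fin 6 → ℝ) :=
  Pi.basisFun_apply ℝ (Fin 6) i

noncomputable def bb : Module.Basis (Fin 6) ℝ L6 := bb0.map eqv

lemma Bf (x y : L6) : B (fmap x) (fmap y) =
    x 0 * y 0 + x 1 * y 1 + x 2 * y 2 + x 3 * y 3 - x 4 * y 4 - x 5 * y 5 := by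
  simp [fmap] <;> erw [LinearMap.coe_mk, AddHom.coe_mk] <;> ring

lemma bb_apply (i : Fin 6) : bb i = fmap (Pi.single i 1) := by
  rw [bb, Module.Basis.map_apply, bb0_apply]; rfl

lemma bb_gram (i j : Fin 6) : B (bb i) (bb j) =
    if i = j then (if (i : ℕ) < 4 then 1 else -1) else 0 := by
  rw [bb_apply, bb_apply]; erw [Bf]
  fin_cases i <;> fin_cases j <;> simp (config := { decide := true }) [Pi.single_apply] <;> norm_num

end L6
namespace L6

/-- the nilradical, as a Lie ideal -/
def N : LieIdeal ℝ L6 where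
  carrier := {x | x 0 = 0}
  add_mem' hx hy := by simp_all
  zero_mem' := rfl
  smul_mem' c x hx := by simp_all
  lie_mem := by intro x m _; show br x m 0 = 0; simp [br]

@[simp] lemma mem_N {x : L6} : x ∈ N ↔ x 0 = 0 := Iff.rfl

/-- the center line -/
def Z : LieIdeal ℝ L6 where
  carrier := {x | x 0 = 0 ∧ x 1 = 0 ∧ x 2 = 0 ∧ x 3 = 0 ∧ x 4 = 0}
  add_mem' hx hy := by
    obtain ⟨h0, h1, h2, h3, h4⟩ := hx; obtain ⟨g0, g1, g2, g3, g4⟩ := hy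
    refine ⟨?_, ?_, ?_, ?_, ?_⟩ <;> simp_all
  zero_mem' := ⟨rfl, rfl, rfl, rfl, rfl⟩
  smul_mem' c x hx := by
    obtain ⟨h0, h1, h2, h3, h4⟩ := hx
    refine ⟨?_, ?_, ?_, ?_, ?_⟩ <;> simp_all
  lie_mem := by
    intro x m hm
    obtain ⟨h0, h1, h2, h3, h4⟩ := hm
    exact ⟨rfl, by simp [br, h0, h2], by simp [br, h0, h1], by simp [br, h0, h4],
      by simp [br, h0, h3]⟩

@[simp] lemma mem_Z {x : L6} :
    x ∈ Z ↔ x 0 = 0 ∧ x 1 = 0 ∧ x 2 = 0 ∧ x 3 = 0 ∧ x 4 = 0 := Iff.rfl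

lemma solvable : LieAlgebra.IsSolvable L6 := by
  rw [LieAlgebra.isSolvable_iff (R := ℝ)]
  refine ⟨3, ?_⟩
  have h1 : LieAlgebra.derivedSeries ℝ L6 1 ≤ N := by
    rw [show (1:ℕ) = 0+1 from rfl, LieAlgebra.derivedSeries_def,
      LieAlgebra.derivedSeriesOfIdeal_succ]
    rw [LieSubmodule.lie_le_iff]
    intro x _ m _
    show br x m 0 = 0
    simp [br]
  have h2 : LieAlgebra.derivedSeries ℝ L6 2 ≤ Z := by
    rw [show (2:ℕ) = 1+1 from rfl, LieAlgebra.derivedSeries_def,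
      LieAlgebra.derivedSeriesOfIdeal_succ, ← LieAlgebra.derivedSeries_def]
    refine le_trans (LieSubmodule.mono_lie h1 h1) ?_
    rw [LieSubmodule.lie_le_iff]
    intro x hx m hm
    rw [mem_N] at hx hm
    exact ⟨rfl, by simp [br, hx, hm], by simp [br, hx, hm], by simp [br, hx, hm],
      by simp [br, hx, hm]⟩
  rw [show (3:ℕ) = 2+1 from rfl, LieAlgebra.derivedSeries_def,
    LieAlgebra.derivedSeriesOfIdeal_succ, ← LieAlgebra.derivedSeries_def]
  rw [le_bot_iff.symm]
  refine le_trans (LieSubmodule.mono_lie h2 h2) ?_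
  rw [LieSubmodule.lie_le_iff]
  intro x hx m hm
  rw [mem_Z] at hx hm
  obtain ⟨h0, h1', h2', h3, h4⟩ := hx
  obtain ⟨g0, g1, g2, g3, g4⟩ := hm
  simp only [LieSubmodule.mem_bot]
  funext i
  fin_cases i <;> simp [br, h0, h1', h2', h3, h4, g0, g1, g2, g3, g4]

end L6
namespace L6

lemma e0_bracket_v : ⁅e 0, e 3 + e 4⁆ = e 3 + e 4 := by
  funext i; fin_cases i <;> simp [br, e] <;> norm_num

lemma not_nilpotent : ¬ LieRing.IsNilpotent L6 := by
  intro h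
  obtain ⟨k, hk⟩ := LieModule.isNilpotent_toEnd_of_isNilpotent ℝ L6 L6 (e 0)
  have key : ∀ n : ℕ, ((LieModule.toEnd ℝ L6 L6 (e 0)) ^ n) (e 3 + e 4) = e 3 + e 4 := by
    intro n
    induction n with
    | zero => rfl
    | succ n ih => rw [pow_succ, Module.End.mul_apply, LieModule.toEnd_apply_apply, e0_bracket_v, ih]
  have h34 : (e 3 + e 4 : L6) ≠ 0 := by
    intro hc
    have := congrFun hc 3
    simp [e] at this
  exact h34 (by rw [← key k, hk, LinearMap.zero_apply])

lemma bb0_repr (x : L6) (i : Fin 6) : bb0.repr x i = x i :=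
  Pi.basisFun_repr ℝ (Fin 6) x i

lemma killing_zero : killingForm ℝ L6 = 0 := by
  ext x y
  rw [killingForm_apply_apply, LinearMap.zero_apply, LinearMap.zero_apply,
    LinearMap.trace_eq_matrix_trace ℝ bb0, Matrix.trace]
  have hdiag : ∀ i, (LinearMap.toMatrix bb0 bb0
      (LieAlgebra.ad ℝ L6 x ∘ₗ LieAlgebra.ad ℝ L6 y)) i i
      = br x (br y (bb0 i)) i := by
    intro i
    rw [LinearMap.toMatrix_apply, LinearMap.comp_apply, LieAlgebra.ad_apply,
      LieAlgebra.ad_apply, bb0_repr]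
    rfl
  simp only [Matrix.diag_apply, hdiag]
  rw [Fin.sum_univ_six]
  have hb : ∀ i : Fin 6, bb0 i = e i := by
    intro i
    rw [bb0_apply]
    funext j
    simp [e, Pi.single_apply, eq_comm]
  simp only [hb]
  simp [br, e]

end L6
namespace L6

/-- The "z-line" inside N, as a Lie submodule of N over N. -/
noncomputable def ZN : LieSubmodule ℝ N N where
  carrier := {x | (x : L6) 0 = 0 ∧ (x : L6) 1 = 0 ∧ (x : L6) 2 = 0 ∧ (x : L6) 3 = 0 ∧
    (x : L6) 4 = 0}
  add_mem' hx hy := by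
    obtain ⟨h0, h1, h2, h3, h4⟩ := hx; obtain ⟨g0, g1, g2, g3, g4⟩ := hy
    refine ⟨?_, ?_, ?_, ?_, ?_⟩ <;> simp_all
  zero_mem' := ⟨rfl, rfl, rfl, rfl, rfl⟩
  smul_mem' c x hx := by
    obtain ⟨h0, h1, h2, h3, h4⟩ := hx
    refine ⟨?_, ?_, ?_, ?_, ?_⟩ <;> simp_all
  lie_mem := by
    intro x m hm
    obtain ⟨h0, h1, h2, h3, h4⟩ := hm
    have hx0 : (x : L6) 0 = 0 := x.2
    exact ⟨rfl, by simp [br, h0, h2], by simp [br, h0, h1],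
      by show br _ _ 3 = 0; simp [br, h0, hx0], by show br _ _ 4 = 0; simp [br, h0, hx0]⟩

lemma N_nilpotent : LieRing.IsNilpotent N := by
  refine (LieModule.isNilpotent_iff ℝ N N).mpr ⟨2, ?_⟩
  have h1 : LieModule.lowerCentralSeries ℝ N N 1 ≤ ZN := by
    rw [show (1:ℕ) = 0+1 from rfl, LieModule.lowerCentralSeries_succ]
    rw [LieSubmodule.lie_le_iff]
    intro x _ m _
    have hx0 : ((x : N) : L6) 0 = 0 := x.2
    have hm0 : ((m : N) : L6) 0 = 0 := m.2
    exact ⟨rfl, by show br _ _ 1 = 0; simp [br, hx0, hm0],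
      by show br _ _ 2 = 0; simp [br, hx0, hm0],
      by show br _ _ 3 = 0; simp [br, hx0, hm0],
      by show br _ _ 4 = 0; simp [br, hx0, hm0]⟩
  rw [show (2:ℕ) = 1+1 from rfl, LieModule.lowerCentralSeries_succ, ← le_bot_iff]
  refine le_trans (LieSubmodule.mono_lie_right _ h1) ?_
  rw [LieSubmodule.lie_le_iff]
  intro x _ m hm
  obtain ⟨h0, h1', h2', h3, h4⟩ := hm
  have hx0 : ((x : N) : L6) 0 = 0 := x.2
  simp only [LieSubmodule.mem_bot]
  apply Subtype.ext
  show br _ _ = 0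
  funext i
  fin_cases i <;> simp [br, hx0, h0, h1', h2', h3, h4]

lemma N_max (m : LieIdeal ℝ L6) (hm : LieRing.IsNilpotent m) : m ≤ N := by
  intro x hx
  rw [mem_N]
  by_contra hα
  -- w = ⁅x, e3 + e4⁆ is an eigenvector of ad x with eigenvalue x 0
  set w : L6 := ⁅x, e 3 + e 4⁆ with hw
  have hwm : w ∈ m := by
    have : ⁅x, e 3 + e 4⁆ = -⁅e 3 + e 4, x⁆ := by rw [← lie_skew]
    rw [hw, this]
    exact neg_mem (m.lie_mem hx)
  have hw3 : w 3 = x 0 := by simp [hw, br, e]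
  have heig : ⁅x, w⁆ = x 0 • w := by
    funext i
    have hw0 : w 0 = 0 := rfl
    have hw1 : w 1 = -(x 0 * ((e 3 + e 4) 2)) + (e 3 + e 4) 0 * x 2 := by simp [hw, br]; ring
    fin_cases i <;> simp [hw, br, e] <;> ring
  obtain ⟨k, hk⟩ := LieModule.isNilpotent_toEnd_of_isNilpotent ℝ m m ⟨x, hx⟩
  have key : ∀ n : ℕ, ((LieModule.toEnd ℝ m m ⟨x, hx⟩) ^ n) ⟨w, hwm⟩ =
      (x 0) ^ n • (⟨w, hwm⟩ : m) := by
    intro n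
    induction n with
    | zero => simp
    | succ n ih =>
        have hfv : (LieModule.toEnd ℝ m m ⟨x, hx⟩) ⟨w, hwm⟩ = x 0 • (⟨w, hwm⟩ : m) := by
          rw [LieModule.toEnd_apply_apply]
          apply Subtype.ext
          rw [LieSubmodule.coe_smul]
          exact heig
        rw [pow_succ, Module.End.mul_apply, hfv, LinearMap.map_smul, ih, smul_smul]
        congr 1
        ring
  have h0 := key k
  rw [hk, LinearMap.zero_apply] at h0
  have : (x 0) ^ k • w = 0 := by
    have := congrArg (fun v : m => (v : L6)) h0
    simpa using this.symm
  have h3 := congrFun this 3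
  simp [hw3] at h3
  rcases h3 with ⟨h, _⟩ | h <;> exact hα h

end L6
namespace L6

instance : FiniteDimensional ℝ L6 := inferInstanceAs (FiniteDimensional ℝ (Fin 6 → ℝ))

noncomputable def proj0 : L6 →ₗ[ℝ] ℝ where
  toFun x := x 0
  map_add' x y := rfl
  map_smul' c x := rfl

lemma N_toSubmodule : (N : Submodule ℝ L6) = LinearMap.ker proj0 := by
  ext x
  simp only [LinearMap.mem_ker]
  exact Iff.rfl

lemma finrank_L6 : Module.finrank ℝ L6 = 6 := Module.finrank_fin_fun ℝ

lemma N_finrank : Module.finrank ℝ N = 5 := by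
  have hsurj : LinearMap.range proj0 = ⊤ := by
    rw [LinearMap.range_eq_top]
    intro c
    exact ⟨fun i => if i = 0 then c else 0, by simp [proj0]; erw [LinearMap.coe_mk, AddHom.coe_mk]; simp⟩

  have h := LinearMap.finrank_range_add_finrank_ker proj0
  rw [hsurj, finrank_top, finrank_L6, Module.finrank_self] at h
  have : Module.finrank ℝ N = Module.finrank ℝ (LinearMap.ker proj0) := by
    rw [← N_toSubmodule]
    rfl
  omega

end L6

/-- There is a 6-dimensional solvable, non-nilpotent real Lie algebra with an
invariant nondegenerate symmetric bilinear form of signature (4,2), vanishing Killing form, and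
5-dimensional nilradical. -/
theorem stmt_2 :
    ∃ (L : Type) (_ : LieRing L) (_ : LieAlgebra ℝ L),
      LieAlgebra.IsSolvable L ∧ ¬ LieRing.IsNilpotent L ∧
      ∃ B : LinearMap.BilinForm ℝ L,
        (∀ x y : L, B x y = B y x) ∧
        B.Nondegenerate ∧
        (∀ x y z : L, B ⁅x, y⁆ z = - B y ⁅x, z⁆) ∧
        (∃ b : Module.Basis (Fin 6) ℝ L,
          ∀ i j, B (b i) (b j) =
            if i = j then (if (i : ℕ) < 4 then 1 else -1) else 0) ∧
        killingForm ℝ L = 0 ∧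
        ∃ n : LieIdeal ℝ L,
          LieRing.IsNilpotent n ∧
          (∀ m : LieIdeal ℝ L, LieRing.IsNilpotent m → m ≤ n) ∧
          Module.finrank ℝ n = 5 := by
  exact ⟨L6, inferInstance, inferInstance, L6.solvable, L6.not_nilpotent, L6.B,
    L6.B_symm, L6.B_nondegenerate, L6.B_invariant, ⟨L6.bb, L6.bb_gram⟩,
    L6.killing_zero, L6.N, L6.N_nilpotent, L6.N_max, L6.N_finrank⟩
end

section
/- For every integer n ≥ 6 there exists an n-dimensional solvable real Lie algebra that is not nilpotent and carries an invariant nondegenerate symmetric bilinear form whose Killing form vanishes identically. -/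
namespace Stmt3

/-- The underlying 6-dimensional space. -/
def M : Type := Fin 6 → ℝ

instance : AddCommGroup M := inferInstanceAs (AddCommGroup (Fin 6 → ℝ))
noncomputable instance : Module ℝ M := inferInstanceAs (Module ℝ (Fin 6 → ℝ))
instance : Module.Finite ℝ M := inferInstanceAs (Module.Finite ℝ (Fin 6 → ℝ))
instance : Module.Free ℝ M := inferInstanceAs (Module.Free ℝ (Fin 6 → ℝ))

/-- The bracket. Coordinates: 0 = d, 1 = p₁, 2 = q₁, 3 = p₂, 4 = q₂, 5 = z. -/
def br (x y : Fin 6 → ℝ) : Fin 6 → ℝ :=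
  ![0,
    x 0 * y 1 - y 0 * x 1,
    y 0 * x 2 - x 0 * y 2,
    y 0 * x 4 - x 0 * y 4,
    x 0 * y 3 - y 0 * x 3,
    x 1 * y 2 - x 2 * y 1 - (x 3 * y 4 - x 4 * y 3)]

@[simp] lemma vec6_five (a b c d e f : ℝ) : ![a,b,c,d,e,f] 5 = f := rfl

lemma br_add_left (x y z : Fin 6 → ℝ) : br (x + y) z = br x z + br y z := by
  funext i; fin_cases i <;> simp [br, Matrix.cons_val_succ] <;> ring

lemma br_add_right (x y z : Fin 6 → ℝ) : br x (y + z) = br x y + br x z := by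
  funext i; fin_cases i <;> simp [br, Matrix.cons_val_succ] <;> ring

lemma br_self (x : Fin 6 → ℝ) : br x x = 0 := by
  funext i; fin_cases i <;> simp [br, Matrix.cons_val_succ] <;> ring

lemma br_leibniz (x y z : Fin 6 → ℝ) :
    br x (br y z) = br (br x y) z + br y (br x z) := by
  funext i; fin_cases i <;> simp [br, Matrix.cons_val_succ] <;> ring

lemma br_smul (t : ℝ) (x y : Fin 6 → ℝ) : br x (t • y) = t • br x y := by
  funext i; fin_cases i <;> simp [br, Matrix.cons_val_succ] <;> ring

noncomputable instance : LieRing M where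
  bracket := br
  add_lie := br_add_left
  lie_add := br_add_right
  lie_self := br_self
  leibniz_lie := br_leibniz

noncomputable instance : LieAlgebra ℝ M := ⟨fun t x y => br_smul t x y⟩

@[simp] lemma M_bracket (x y : M) : ⁅x, y⁆ = br x y := rfl


@[simp] lemma M_add_apply (x y : M) (i : Fin 6) : (x + y) i = x i + y i := rfl
@[simp] lemma M_smul_apply (t : ℝ) (x : M) (i : Fin 6) : (t • x) i = t * x i := rfl
@[simp] lemma M_zero_apply (i : Fin 6) : (0 : M) i = 0 := rfl

/-- The invariant form on `M`. -/
def B0 (x y : Fin 6 → ℝ) : ℝ :=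
  x 0 * y 5 + x 5 * y 0 + x 1 * y 2 + x 2 * y 1 - x 3 * y 3 - x 4 * y 4

noncomputable def BM : LinearMap.BilinForm ℝ M :=
  LinearMap.mk₂ ℝ (fun x y => B0 x y)
    (fun x y z => by show B0 (x + y) z = B0 x z + B0 y z; simp [B0]; ring)
    (fun t x y => by show B0 (t • x) y = t * B0 x y; simp [B0]; ring)
    (fun x y z => by show B0 x (y + z) = B0 x y + B0 x z; simp [B0]; ring)
    (fun t x y => by show B0 x (t • y) = t * B0 x y; simp [B0]; ring)

lemma BM_apply (x y : M) : BM x y = B0 x y := rfl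

lemma BM_symm (x y : M) : BM x y = BM y x := by
  show B0 x y = B0 y x; simp [B0]; ring

lemma BM_nondeg : ∀ x : M, (∀ y : M, BM x y = 0) → x = 0 := by
  intro x hx
  funext i
  fin_cases i
  · have := hx (Pi.single 5 1); change B0 x (Pi.single 5 1) = 0 at this; simpa [B0, Pi.single_apply] using this
  · have := hx (Pi.single 2 1); change B0 x (Pi.single 2 1) = 0 at this; simpa [B0, Pi.single_apply] using this
  · have := hx (Pi.single 1 1); change B0 x (Pi.single 1 1) = 0 at this; simpa [B0, Pi.single_apply] using this
  · have := hx (Pi.single 3 1); change B0 x (Pi.single 3 1) = 0 at this; simpa [B0, Pi.single_apply] using this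
  · have := hx (Pi.single 4 1); change B0 x (Pi.single 4 1) = 0 at this; simpa [B0, Pi.single_apply] using this
  · have := hx (Pi.single 0 1); change B0 x (Pi.single 0 1) = 0 at this; simpa [B0, Pi.single_apply] using this

lemma BM_inv (x y z : M) : BM ⁅x, y⁆ z = - BM y ⁅x, z⁆ := by
  show B0 (br x y) z = - B0 y (br x z)
  simp [B0, br]; ring

noncomputable def bM : Module.Basis (Fin 6) ℝ M := Pi.basisFun ℝ (Fin 6)

lemma killing_M (x y : M) : killingForm ℝ M x y = 0 := by
  rw [killingForm_apply_apply, LinearMap.trace_eq_matrix_trace ℝ bM, Matrix.trace]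
  have h : ∀ i : Fin 6,
      Matrix.diag ((LinearMap.toMatrix bM bM)
        (LieAlgebra.ad ℝ M x ∘ₗ LieAlgebra.ad ℝ M y)) i
      = br x (br y (Pi.single i 1)) i := by
    intro i
    rfl
  rw [Fin.sum_univ_six]
  simp only [h]
  simp [br, Pi.single_apply]


/-! ### The abelian factor -/

def A (k : ℕ) : Type := Fin k → ℝ

instance (k : ℕ) : AddCommGroup (A k) := inferInstanceAs (AddCommGroup (Fin k → ℝ))
noncomputable instance (k : ℕ) : Module ℝ (A k) := inferInstanceAs (Module ℝ (Fin k → ℝ))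
instance (k : ℕ) : Module.Finite ℝ (A k) := inferInstanceAs (Module.Finite ℝ (Fin k → ℝ))
instance (k : ℕ) : Module.Free ℝ (A k) := inferInstanceAs (Module.Free ℝ (Fin k → ℝ))

instance (k : ℕ) : LieRing (A k) where
  bracket _ _ := 0
  add_lie _ _ _ := by simp
  lie_add _ _ _ := by simp
  lie_self _ := rfl
  leibniz_lie _ _ _ := by simp

noncomputable instance (k : ℕ) : LieAlgebra ℝ (A k) := ⟨fun t x y => by
  show (0 : A k) = t • (0 : A k); simp⟩

/-! ### Products of Lie algebras -/

noncomputable instance prodLieRing (P Q : Type) [LieRing P] [LieRing Q] : LieRing (P × Q) where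
  bracket x y := (⁅x.1, y.1⁆, ⁅x.2, y.2⁆)
  add_lie x y z := Prod.ext (add_lie x.1 y.1 z.1) (add_lie x.2 y.2 z.2)
  lie_add x y z := Prod.ext (lie_add x.1 y.1 z.1) (lie_add x.2 y.2 z.2)
  lie_self x := Prod.ext (lie_self x.1) (lie_self x.2)
  leibniz_lie x y z := Prod.ext (leibniz_lie x.1 y.1 z.1) (leibniz_lie x.2 y.2 z.2)

noncomputable instance prodLieAlgebra (P Q : Type) [LieRing P] [LieRing Q]
    [LieAlgebra ℝ P] [LieAlgebra ℝ Q] : LieAlgebra ℝ (P × Q) :=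
  ⟨fun t x y => Prod.ext (lie_smul t x.1 y.1) (lie_smul t x.2 y.2)⟩

@[simp] lemma prod_bracket {P Q : Type} [LieRing P] [LieRing Q] (x y : P × Q) :
    ⁅x, y⁆ = (⁅x.1, y.1⁆, ⁅x.2, y.2⁆) := rfl

/-! ### The Lie algebra `L k = M × A k` -/

abbrev L (k : ℕ) : Type := M × A k

@[simp] lemma A_bracket {k : ℕ} (a b : A k) : ⁅a, b⁆ = 0 := rfl

/-- First solvability ideal: first `M`-coordinate and `A`-part vanish. -/
noncomputable def I1 (k : ℕ) : LieIdeal ℝ (L k) where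
  carrier := {p | p.1 0 = 0 ∧ p.2 = 0}
  add_mem' := by
    rintro p q ⟨hp1, hp2⟩ ⟨hq1, hq2⟩
    exact ⟨by show p.1 0 + q.1 0 = 0; rw [hp1, hq1, add_zero],
           by show p.2 + q.2 = 0; rw [hp2, hq2, add_zero]⟩
  zero_mem' := ⟨rfl, rfl⟩
  smul_mem' := by
    rintro t p ⟨hp1, hp2⟩
    exact ⟨by show t * p.1 0 = 0; rw [hp1, mul_zero],
           by show t • p.2 = 0; rw [hp2, smul_zero]⟩
  lie_mem := by
    rintro x p ⟨hp1, hp2⟩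
    exact ⟨rfl, rfl⟩

/-- Second solvability ideal: the centre `ℝ·z`. -/
noncomputable def I2 (k : ℕ) : LieIdeal ℝ (L k) where
  carrier := {p | p.1 0 = 0 ∧ p.1 1 = 0 ∧ p.1 2 = 0 ∧ p.1 3 = 0 ∧ p.1 4 = 0 ∧ p.2 = 0}
  add_mem' := by
    rintro p q ⟨h0, h1, h2, h3, h4, h5⟩ ⟨g0, g1, g2, g3, g4, g5⟩
    refine ⟨?_, ?_, ?_, ?_, ?_, ?_⟩
    · show p.1 0 + q.1 0 = 0; rw [h0, g0, add_zero]
    · show p.1 1 + q.1 1 = 0; rw [h1, g1, add_zero]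
    · show p.1 2 + q.1 2 = 0; rw [h2, g2, add_zero]
    · show p.1 3 + q.1 3 = 0; rw [h3, g3, add_zero]
    · show p.1 4 + q.1 4 = 0; rw [h4, g4, add_zero]
    · show p.2 + q.2 = 0; rw [h5, g5, add_zero]
  zero_mem' := ⟨rfl, rfl, rfl, rfl, rfl, rfl⟩
  smul_mem' := by
    rintro t p ⟨h0, h1, h2, h3, h4, h5⟩
    refine ⟨?_, ?_, ?_, ?_, ?_, ?_⟩
    · show t * p.1 0 = 0; rw [h0, mul_zero]
    · show t * p.1 1 = 0; rw [h1, mul_zero]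
    · show t * p.1 2 = 0; rw [h2, mul_zero]
    · show t * p.1 3 = 0; rw [h3, mul_zero]
    · show t * p.1 4 = 0; rw [h4, mul_zero]
    · show t • p.2 = 0; rw [h5, smul_zero]
  lie_mem := by
    rintro x p ⟨h0, h1, h2, h3, h4, h5⟩
    refine ⟨rfl, ?_, ?_, ?_, ?_, rfl⟩
    · show x.1 0 * p.1 1 - p.1 0 * x.1 1 = 0; rw [h0, h1]; ring
    · show p.1 0 * x.1 2 - x.1 0 * p.1 2 = 0; rw [h0, h2]; ring
    · show p.1 0 * x.1 4 - x.1 0 * p.1 4 = 0; rw [h0, h4]; ring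
    · show x.1 0 * p.1 3 - p.1 0 * x.1 3 = 0; rw [h0, h3]; ring

lemma mem_I1 {k : ℕ} (p : L k) : p ∈ I1 k ↔ p.1 0 = 0 ∧ p.2 = 0 := Iff.rfl

lemma mem_I2 {k : ℕ} (p : L k) :
    p ∈ I2 k ↔ p.1 0 = 0 ∧ p.1 1 = 0 ∧ p.1 2 = 0 ∧ p.1 3 = 0 ∧ p.1 4 = 0 ∧ p.2 = 0 := Iff.rfl

lemma solvable_L (k : ℕ) : LieAlgebra.IsSolvable (L k) := by
  rw [LieAlgebra.isSolvable_iff ℝ]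
  refine ⟨3, ?_⟩
  have h1 : LieAlgebra.derivedSeries ℝ (L k) 1 ≤ I1 k := by
    rw [LieAlgebra.derivedSeries_def, LieAlgebra.derivedSeriesOfIdeal_succ,
      LieAlgebra.derivedSeriesOfIdeal_zero]
    rw [LieSubmodule.lie_le_iff]
    intro x _ m _
    exact ⟨rfl, rfl⟩
  have h2 : LieAlgebra.derivedSeries ℝ (L k) 2 ≤ I2 k := by
    have : LieAlgebra.derivedSeries ℝ (L k) 2 ≤ ⁅I1 k, I1 k⁆ := by
      rw [show (2 : ℕ) = 1 + 1 from rfl, LieAlgebra.derivedSeries_def,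
        LieAlgebra.derivedSeriesOfIdeal_succ, ← LieAlgebra.derivedSeries_def]
      exact LieSubmodule.mono_lie h1 h1
    refine le_trans this ?_
    rw [LieSubmodule.lie_le_iff]
    rintro x ⟨hx0, hx2⟩ m ⟨hm0, hm2⟩
    refine ⟨rfl, ?_, ?_, ?_, ?_, rfl⟩
    · show x.1 0 * m.1 1 - m.1 0 * x.1 1 = 0; rw [hx0, hm0]; ring
    · show m.1 0 * x.1 2 - x.1 0 * m.1 2 = 0; rw [hx0, hm0]; ring
    · show m.1 0 * x.1 4 - x.1 0 * m.1 4 = 0; rw [hx0, hm0]; ring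
    · show x.1 0 * m.1 3 - m.1 0 * x.1 3 = 0; rw [hx0, hm0]; ring
  have h3 : LieAlgebra.derivedSeries ℝ (L k) 3 ≤ ⊥ := by
    have : LieAlgebra.derivedSeries ℝ (L k) 3 ≤ ⁅I2 k, I2 k⁆ := by
      rw [show (3 : ℕ) = 2 + 1 from rfl, LieAlgebra.derivedSeries_def,
        LieAlgebra.derivedSeriesOfIdeal_succ, ← LieAlgebra.derivedSeries_def]
      exact LieSubmodule.mono_lie h2 h2
    refine le_trans this ?_
    rw [LieSubmodule.lie_le_iff]
    rintro x ⟨hx0, hx1, hx2, hx3, hx4, hxA⟩ m ⟨hm0, hm1, hm2, hm3, hm4, hmA⟩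
    rw [LieSubmodule.mem_bot]
    have : ⁅x, m⁆ = (br x.1 m.1, 0) := rfl
    rw [this]
    have hbr : br x.1 m.1 = 0 := by
      funext i; fin_cases i <;>
        simp [br, hx0, hx1, hx2, hx3, hx4, hm0, hm1, hm2, hm3, hm4]
    rw [hbr]; rfl
  exact le_bot_iff.mp h3


@[simp] lemma A_add_apply {k : ℕ} (x y : A k) (i : Fin k) : (x + y) i = x i + y i := rfl
@[simp] lemma A_smul_apply {k : ℕ} (t : ℝ) (x : A k) (i : Fin k) : (t • x) i = t * x i := rfl
@[simp] lemma A_zero_apply {k : ℕ} (i : Fin k) : (0 : A k) i = 0 := rfl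

/-! ### Non-nilpotency -/

noncomputable def dElt (k : ℕ) : L k := (Pi.single 0 1, 0)
noncomputable def pElt (k : ℕ) : L k := (Pi.single 1 1, 0)

lemma bracket_dp (k : ℕ) : ⁅dElt k, pElt k⁆ = pElt k := by
  refine Prod.ext ?_ rfl
  show br (Pi.single 0 1) (Pi.single 1 1) = Pi.single 1 1
  funext i; fin_cases i <;> simp [br, Pi.single_apply]

lemma pElt_mem_lcs (k : ℕ) : ∀ j, pElt k ∈ LieModule.lowerCentralSeries ℝ (L k) (L k) j := by
  intro j
  induction j with
  | zero => exact LieSubmodule.mem_top _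
  | succ j ih =>
    rw [LieModule.lowerCentralSeries_succ]
    exact bracket_dp k ▸ LieSubmodule.lie_mem_lie (LieSubmodule.mem_top _) ih

lemma not_nilpotent_L (k : ℕ) : ¬ LieRing.IsNilpotent (L k) := by
  intro h
  obtain ⟨j, hj⟩ := (LieModule.isNilpotent_iff ℝ (L k) (L k)).mp h
  have := pElt_mem_lcs k j
  rw [hj, LieSubmodule.mem_bot] at this
  have h1 : (pElt k).1 1 = 1 := by simp [pElt, Pi.single_apply]
  rw [this] at h1
  have h0 : ((0 : L k)).1 1 = (0 : ℝ) := rfl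
  rw [h0] at h1
  exact zero_ne_one h1

/-! ### The bilinear form on `L k` -/

noncomputable def BL (k : ℕ) : LinearMap.BilinForm ℝ (L k) :=
  LinearMap.mk₂ ℝ (fun x y => B0 x.1 y.1 + ∑ i, x.2 i * y.2 i)
    (fun x y z => by
      simp only [Prod.fst_add, Prod.snd_add, B0, M_add_apply, A_add_apply, add_mul]
      rw [Finset.sum_add_distrib]; ring)
    (fun t x y => by
      simp only [Prod.smul_fst, Prod.smul_snd, B0, M_smul_apply, A_smul_apply, smul_eq_mul,
        Finset.mul_sum, mul_add, mul_sub]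
      congr 1
      · ring
      · exact Finset.sum_congr rfl fun i _ => by ring)
    (fun x y z => by
      simp only [Prod.fst_add, Prod.snd_add, B0, M_add_apply, A_add_apply, mul_add]
      rw [Finset.sum_add_distrib]; ring)
    (fun t x y => by
      simp only [Prod.smul_fst, Prod.smul_snd, B0, M_smul_apply, A_smul_apply, smul_eq_mul,
        Finset.mul_sum, mul_add, mul_sub]
      congr 1
      · ring
      · exact Finset.sum_congr rfl fun i _ => by ring)

lemma BL_apply {k : ℕ} (x y : L k) : BL k x y = B0 x.1 y.1 + ∑ i, x.2 i * y.2 i := rfl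

lemma BL_symm {k : ℕ} (x y : L k) : BL k x y = BL k y x := by
  rw [BL_apply, BL_apply]
  have : B0 x.1 y.1 = B0 y.1 x.1 := BM_symm x.1 y.1
  rw [this]
  congr 1
  exact Finset.sum_congr rfl fun i _ => by ring

lemma BL_nondeg {k : ℕ} : (BL k).Nondegenerate := by
  refine (fun hL : LinearMap.SeparatingLeft (BL k) => ⟨hL, fun y hy => hL y fun x => by rw [BL_symm]; exact hy x⟩) ?_
  intro x hx
  have h1 : x.1 = 0 := by
    apply BM_nondeg
    intro y
    have := hx (y, 0)
    rw [BL_apply] at this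
    rw [BM_apply]; simpa using this
  have h2 : x.2 = 0 := by
    funext j
    have := hx (0, Pi.single j 1)
    rw [BL_apply] at this
    have hB : B0 x.1 (0 : M) = 0 := by simp [B0]
    rw [hB, zero_add] at this
    rw [Finset.sum_eq_single j (fun b _ hb => by simp [Pi.single_apply, hb]) (by simp)] at this
    simpa using this
  exact Prod.ext h1 h2

lemma BL_inv {k : ℕ} (x y z : L k) : BL k ⁅x, y⁆ z = - BL k y ⁅x, z⁆ := by
  rw [BL_apply, BL_apply]
  show B0 (br x.1 y.1) z.1 + ∑ i, (0 : A k) i * z.2 i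
      = -(B0 y.1 (br x.1 z.1) + ∑ i, y.2 i * (0 : A k) i)
  simp only [A_zero_apply, zero_mul, mul_zero, Finset.sum_const_zero, add_zero]
  exact BM_inv x.1 y.1 z.1

/-! ### Killing form of `L k` -/

lemma killing_L (k : ℕ) : killingForm ℝ (L k) = 0 := by
  refine LinearMap.ext fun x => LinearMap.ext fun y => ?_
  have hmap : (LieAlgebra.ad ℝ (L k) x ∘ₗ LieAlgebra.ad ℝ (L k) y)
      = LinearMap.prodMap (LieAlgebra.ad ℝ M x.1 ∘ₗ LieAlgebra.ad ℝ M y.1)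
          (0 : A k →ₗ[ℝ] A k) :=
    LinearMap.ext fun z => Prod.ext rfl rfl
  rw [LinearMap.zero_apply, LinearMap.zero_apply, killingForm_apply_apply, hmap,
    LinearMap.trace_prodMap']
  have h := killing_M x.1 y.1
  rw [killingForm_apply_apply] at h
  rw [h, map_zero, add_zero]

lemma finrank_L (k : ℕ) : Module.finrank ℝ (L k) = 6 + k := by
  have hM : Module.finrank ℝ M = 6 := by
    have : Module.finrank ℝ M = Module.finrank ℝ (Fin 6 → ℝ) := rfl
    rw [this]; simp
  have hA : Module.finrank ℝ (A k) = k := by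
    have : Module.finrank ℝ (A k) = Module.finrank ℝ (Fin k → ℝ) := rfl
    rw [this]; simp
  rw [Module.finrank_prod, hM, hA]

end Stmt3

/-- For every `n ≥ 6` there is an `n`-dimensional solvable, non-nilpotent real
Lie algebra with an invariant nondegenerate symmetric bilinear form and identically vanishing
Killing form. -/
theorem stmt_3 (n : ℕ) (hn : 6 ≤ n) :
    ∃ (L : Type) (_ : LieRing L) (_ : LieAlgebra ℝ L),
      Module.finrank ℝ L = n ∧
      LieAlgebra.IsSolvable L ∧ ¬ LieRing.IsNilpotent L ∧
      ∃ B : LinearMap.BilinForm ℝ L,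
        (∀ x y : L, B x y = B y x) ∧
        B.Nondegenerate ∧
        (∀ x y z : L, B ⁅x, y⁆ z = - B y ⁅x, z⁆) ∧
        killingForm ℝ L = 0 := by
  refine ⟨Stmt3.L (n - 6), inferInstance, inferInstance, ?_,
    Stmt3.solvable_L _, Stmt3.not_nilpotent_L _,
    Stmt3.BL _, Stmt3.BL_symm, Stmt3.BL_nondeg, Stmt3.BL_inv, Stmt3.killing_L _⟩
  rw [Stmt3.finrank_L]
  omega
end

section
/- Let (𝔤, ⟨·,·⟩) be a solvable metric Lie algebra whose Killing form vanishes identically, and suppose ⟨·,·⟩ is Lorentzian, i.e. has signature (dim 𝔤 − 1, 1). Then 𝔤 is abelian. -/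
set_option maxHeartbeats 2000000

lemma lorentz_coord {L : Type*} [AddCommGroup L] [Module ℝ L] {n : ℕ}
    (B : LinearMap.BilinForm ℝ L) (b : Module.Basis (Fin n) ℝ L)
    (hb : ∀ i j, B (b i) (b j) =
      if i = j then (if (i : ℕ) + 1 = n then (-1 : ℝ) else 1) else 0)
    (hn : 0 < n) (v : L) (h0 : b.repr v ⟨n - 1, by omega⟩ = 0) :
    0 ≤ B v v ∧ (B v v = 0 → v = 0) := by
  set last : Fin n := ⟨n - 1, by omega⟩ with hlast
  have hiff : ∀ i : Fin n, ((i : ℕ) + 1 = n) = (i = last) := by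
    intro i
    have : ((i : ℕ) + 1 = n) ↔ (i = last) := by
      constructor
      · intro h; apply Fin.ext; simp [hlast]; omega
      · intro h; subst h; simp [hlast]; omega
    exact propext this
  let r : Fin n → ℝ := fun i => b.repr v i
  have hv : v = ∑ i, r i • b i := (b.sum_repr v).symm
  have h1 : B v v = ∑ i, (if i = last then (-1 : ℝ) else 1) * r i ^ 2 := by
    conv_lhs => rw [hv]
    rw [map_sum]
    refine Finset.sum_congr rfl fun i _ => ?_
    rw [map_sum, LinearMap.sum_apply]
    rw [Finset.sum_eq_single i]
    · have hbi := hb i i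
      rw [if_pos rfl] at hbi
      simp only [hiff] at hbi
      simp only [map_smul, LinearMap.smul_apply, smul_eq_mul, hbi]
      ring
    · intro j _ hji
      simp only [map_smul, LinearMap.smul_apply, smul_eq_mul, hb]
      simp [hji]
    · simp
  have hterm : ∀ i : Fin n, (if i = last then (-1 : ℝ) else 1) * r i ^ 2
      = if i = last then 0 else r i ^ 2 := by
    intro i
    by_cases h : i = last
    · subst h; simp [r, h0]
    · simp [h]
  rw [h1]
  have hnn : ∀ i ∈ Finset.univ, (0:ℝ) ≤ (if i = last then (-1 : ℝ) else 1) * r i ^ 2 := by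
    intro i _; rw [hterm]
    by_cases h : i = last
    · simp [h]
    · simp [h]; positivity
  constructor
  · exact Finset.sum_nonneg hnn
  · intro hsum
    have hall := (Finset.sum_eq_zero_iff_of_nonneg hnn).mp hsum
    have hr : ∀ i, r i = 0 := by
      intro i
      by_cases h : i = last
      · subst h; exact h0
      · have := hall i (Finset.mem_univ i)
        rw [hterm, if_neg h] at this
        exact pow_eq_zero_iff (by norm_num) |>.mp this
    have : b.repr v = 0 := by
      ext i; exact hr i
    simpa using b.repr.map_eq_zero_iff.mp this
/-- A solvable metric Lie algebra with vanishing Killing form whose scalar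
product is Lorentzian (signature `(dim 𝔤 − 1, 1)`) is abelian. -/
theorem stmt_4 (L : Type*) [LieRing L] [LieAlgebra ℝ L] [FiniteDimensional ℝ L]
    [LieAlgebra.IsSolvable L]
    (B : LinearMap.BilinForm ℝ L)
    (hsymm : ∀ x y : L, B x y = B y x)
    (hnondeg : B.Nondegenerate)
    (hinv : ∀ x y z : L, B ⁅x, y⁆ z = - B y ⁅x, z⁆)
    (hkilling : killingForm ℝ L = 0)
    (n : ℕ) (hdim : Module.finrank ℝ L = n)
    (hLorentz : ∃ b : Module.Basis (Fin n) ℝ L,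
      ∀ i j, B (b i) (b j) =
        if i = j then (if (i : ℕ) + 1 = n then -1 else 1) else 0) :
    IsLieAbelian L := by
  classical
  obtain ⟨b, hb⟩ := hLorentz
  have hrefl : B.IsRefl := fun x y h => by rw [hsymm]; exact h
  set W : LieIdeal ℝ L := LieAlgebra.derivedSeries ℝ L 1 with hWdef
  have hW1 : W = ⁅(⊤ : LieIdeal ℝ L), ⊤⁆ := by
    rw [hWdef, LieAlgebra.derivedSeries_def, LieAlgebra.derivedSeriesOfIdeal_succ,
      LieAlgebra.derivedSeriesOfIdeal_zero]
  have hmemW : ∀ x y : L, ⁅x, y⁆ ∈ W := by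
    intro x y
    rw [hW1]
    exact LieSubmodule.lie_mem_lie (LieSubmodule.mem_top x) (LieSubmodule.mem_top y)
  have hWperp_central : ∀ x : L, (∀ w ∈ W, B x w = 0) → ∀ u : L, ⁅u, x⁆ = 0 := by
    intro x hx u
    apply hnondeg.1
    intro v
    rw [hinv]
    rw [hx _ (hmemW u v)]
    simp
  by_cases hiso : ∃ e, e ∈ W ∧ e ≠ 0 ∧ ∀ w ∈ W, B e w = 0
  · obtain ⟨e, heW, he0, heperp⟩ := hiso
    have hee : B e e = 0 := heperp e heW
    have hecen : ∀ u : L, ⁅u, e⁆ = 0 := hWperp_central e heperp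
    have hBre : ∀ x y : L, B ⁅x, y⁆ e = 0 := by
      intro x y
      rw [hinv, hecen x]
      simp
    -- construct the null partner d of e
    obtain ⟨y0, hy0⟩ : ∃ y, B e y ≠ 0 := by
      by_contra h
      push_neg at h
      exact he0 (hnondeg.1 e h)
    set d : L := (B e y0)⁻¹ • y0 - ((B e y0)⁻¹ ^ 2 * B y0 y0 / 2) • e with hd
    have hed : B e d = 1 := by
      rw [hd]
      simp only [map_sub, map_smul, smul_eq_mul, hee, mul_zero, sub_zero]
      field_simp
    have hdd : B d d = 0 := by
      rw [hd]
      simp only [map_sub, map_smul, LinearMap.sub_apply, LinearMap.smul_apply,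
        smul_eq_mul, hee, hsymm y0 e]
      field_simp
      ring
    have hde : B d e = 1 := by rw [hsymm d e]; exact hed
    -- coordinate functional
    haveI : Nontrivial L := nontrivial_of_ne e 0 he0
    have hn : 0 < n := hdim ▸ Module.finrank_pos
    have key := fun v (h : b.repr v ⟨n - 1, by omega⟩ = 0) => lorentz_coord B b hb hn v h
    set π : L → ℝ := fun z => b.repr z ⟨n - 1, by omega⟩ with hπ
    have hπe : π e ≠ 0 := fun h => he0 ((key e h).2 hee)
    have P1 : ∀ w, B w e = 0 → 0 ≤ B w w := by
      intro w hw
      set v : L := π e • w - π w • e with hv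
      have hπv : π v = 0 := by simp only [hv, hπ, map_sub, map_smul]; simp; ring
      have h2 : B v v = π e ^ 2 * B w w := by
        simp only [hv, map_sub, map_smul, LinearMap.sub_apply, LinearMap.smul_apply,
          smul_eq_mul, hee, hsymm e w, hw]
        ring
      have h3 := (key v hπv).1
      rw [h2] at h3
      have h4 : 0 < π e ^ 2 := by positivity
      nlinarith
    have P2 : ∀ w, B w e = 0 → B w w = 0 → ∃ c : ℝ, w = c • e := by
      intro w hw hww
      set v : L := π e • w - π w • e with hv
      have hπv : π v = 0 := by simp only [hv, hπ, map_sub, map_smul]; simp; ring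
      have h2 : B v v = π e ^ 2 * B w w := by
        simp only [hv, map_sub, map_smul, LinearMap.sub_apply, LinearMap.smul_apply,
          smul_eq_mul, hee, hsymm e w, hw]
        ring
      have h3 : v = 0 := (key v hπv).2 (by rw [h2, hww, mul_zero])
      have h4 : π e • w = π w • e := by rwa [hv, sub_eq_zero] at h3
      refine ⟨(π e)⁻¹ * π w, ?_⟩
      have := congrArg (fun z => (π e)⁻¹ • z) h4
      simpa [smul_smul, inv_mul_cancel₀ hπe] using this
    -- the positive definite subspace E
    set E : Submodule ℝ L := LinearMap.ker (B e) ⊓ LinearMap.ker (B d) with hE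
    have hmemE : ∀ z, z ∈ E ↔ B e z = 0 ∧ B d z = 0 := by
      intro z; simp [hE, LinearMap.mem_ker]
    have hEe : ∀ z ∈ E, B z e = 0 := fun z hz => by
      rw [hsymm]; exact ((hmemE z).mp hz).1
    have hEd : ∀ z ∈ E, B z d = 0 := fun z hz => by
      rw [hsymm]; exact ((hmemE z).mp hz).2
    have hEpos : ∀ z ∈ E, z ≠ 0 → 0 < B z z := by
      intro z hz hz0
      rcases (P1 z (hEe z hz)).lt_or_eq with h | h
      · exact h
      · exfalso
        obtain ⟨c, rfl⟩ := P2 z (hEe z hz) h.symm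
        have hc : B d (c • e) = c := by rw [map_smul, smul_eq_mul, hde, mul_one]
        rw [((hmemE _).mp hz).2] at hc
        rw [← hc] at hz0
        simp at hz0
    -- orthonormal family spanning E
    haveI : Invertible (2 : ℝ) := invertibleOfNonzero two_ne_zero
    have hsymmE : (B.restrict E).IsSymm := by
      refine ⟨fun x y => ?_⟩
      simpa using hsymm x y
    set m := Module.finrank ℝ ↥E with hm
    obtain ⟨bE, hbE⟩ := LinearMap.BilinForm.exists_orthogonal_basis (LinearMap.BilinForm.isSymm_iff.mp hsymmE)
    set c : Fin m → ℝ := fun k => B (bE k) (bE k) with hc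
    have hcpos : ∀ k, 0 < c k := by
      intro k
      refine hEpos _ (bE k).2 ?_
      intro h
      exact bE.ne_zero k (Subtype.ext h)
    set u : Fin m → L := fun k => (Real.sqrt (c k))⁻¹ • ↑(bE k) with hu
    have huE : ∀ k, u k ∈ E := fun k => E.smul_mem _ (bE k).2
    have hsq : ∀ k, Real.sqrt (c k) ≠ 0 := fun k => ne_of_gt (Real.sqrt_pos.mpr (hcpos k))
    have huu : ∀ i j, B (u i) (u j) = if i = j then 1 else 0 := by
      intro i j
      by_cases h : i = j
      · subst h
        rw [if_pos rfl, hu]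
        simp only [map_smul, LinearMap.smul_apply, smul_eq_mul, ← hc]
        rw [← mul_assoc, ← mul_inv, Real.mul_self_sqrt (le_of_lt (hcpos i)),
          inv_mul_cancel₀ (ne_of_gt (hcpos i))]
      · rw [if_neg h, hu]
        have h0 : B ↑(bE i) ↑(bE j) = 0 := by
          have h1 : (B.restrict E) (bE i) (bE j) = 0 := hbE h
          simpa [LinearMap.BilinForm.restrict_apply] using h1
        simp only [map_smul, LinearMap.smul_apply, smul_eq_mul, h0, mul_zero]
    have hspanE : ∀ z ∈ E, z ∈ Submodule.span ℝ (Set.range u) := by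
      intro z hz
      have hc2 : ∀ k, (bE k : L) = Real.sqrt (c k) • u k := by
        intro k
        have huk : u k = (Real.sqrt (c k))⁻¹ • (bE k : L) := congrFun hu k
        rw [huk, smul_smul, mul_inv_cancel₀ (hsq k), one_smul]
      have h1 : (⟨z, hz⟩ : ↥E) = ∑ k, bE.repr ⟨z, hz⟩ k • bE k := (bE.sum_repr _).symm
      have hzeq : z = ∑ k, bE.repr ⟨z, hz⟩ k • (bE k : L) := by
        have := congrArg (fun w : ↥E => (w : L)) h1
        simp only [Submodule.coe_sum, Submodule.coe_smul] at this; exact this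
      rw [hzeq]
      refine Submodule.sum_mem _ fun k _ => ?_
      rw [hc2 k, smul_smul]
      exact Submodule.smul_mem _ _ (Submodule.subset_span ⟨k, rfl⟩)
    -- decomposition of a general vector
    have hDC : ∀ z : L, z - B z d • e - B z e • d ∈ E := by
      intro z
      rw [hmemE]
      constructor
      · simp only [map_sub, map_smul, smul_eq_mul, hee, hed, hsymm e z]
        ring
      · simp only [map_sub, map_smul, smul_eq_mul, hde, hdd, hsymm d z]
        ring
    -- adapted basis
    set f : (Unit ⊕ Unit) ⊕ Fin m → L := Sum.elim (Sum.elim (fun _ => e) (fun _ => d)) u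
      with hf
    set wv : (Unit ⊕ Unit) ⊕ Fin m → L := Sum.elim (Sum.elim (fun _ => d) (fun _ => e)) u
      with hwv
    have hdual : ∀ i j, B (f i) (wv j) = if i = j then 1 else 0 := by
      rintro ((_ | _) | k) ((_ | _) | j) <;>
        simp [hf, hwv, hed, hde, hdd, hee, huu, hEe _ (huE _), hEd _ (huE _),
          ((hmemE _).mp (huE _)).1, ((hmemE _).mp (huE _)).2]
    have hspan : ⊤ ≤ Submodule.span ℝ (Set.range f) := by
      intro z _
      have h1 : e ∈ Submodule.span ℝ (Set.range f) :=
        Submodule.subset_span ⟨Sum.inl (Sum.inl ()), rfl⟩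
      have h2 : d ∈ Submodule.span ℝ (Set.range f) :=
        Submodule.subset_span ⟨Sum.inl (Sum.inr ()), rfl⟩
      have h3 : z - B z d • e - B z e • d ∈ Submodule.span ℝ (Set.range f) := by
        refine Submodule.span_mono ?_ (hspanE _ (hDC z))
        rintro _ ⟨k, rfl⟩
        exact ⟨Sum.inr k, rfl⟩
      have h4 : z = (z - B z d • e - B z e • d) + B z d • e + B z e • d := by abel
      rw [h4]
      exact add_mem (add_mem h3 (Submodule.smul_mem _ _ h1)) (Submodule.smul_mem _ _ h2)
    have hindep : LinearIndependent ℝ f := by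
      rw [linearIndependent_iff']
      intro s g hsum i hi
      have h1 := congrArg (fun z => B z (wv i)) hsum
      simp only [map_sum, map_smul, LinearMap.sum_apply, LinearMap.smul_apply,
        smul_eq_mul, map_zero, LinearMap.zero_apply, hdual] at h1
      rw [Finset.sum_eq_single_of_mem i hi] at h1
      · rw [if_pos rfl, mul_one] at h1; exact h1
      · intro j _ hji
        rw [if_neg hji, mul_zero]
    set b' : Module.Basis ((Unit ⊕ Unit) ⊕ Fin m) ℝ L := Module.Basis.mk hindep hspan with hb'def
    have hb' : ∀ i, b' i = f i := fun i => Module.Basis.mk_apply hindep hspan i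
    have hrepr : ∀ (z : L) j, b'.repr z j = B z (wv j) := by
      intro z j
      conv_rhs => rw [← b'.sum_repr z]
      rw [map_sum, LinearMap.sum_apply]
      rw [Finset.sum_eq_single j]
      · rw [map_smul, LinearMap.smul_apply, smul_eq_mul, hb', hdual, if_pos rfl, mul_one]
      · intro i _ hij
        rw [map_smul, LinearMap.smul_apply, smul_eq_mul, hb', hdual, if_neg hij, mul_zero]
      · intro h; simp at h
    -- the killing form computation: brackets with E land in the line through e
    have hT : ∀ (x : L) (k : Fin m), ∃ cc : ℝ, ⁅x, u k⁆ = cc • e := by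
      intro x
      have h0 : killingForm ℝ L x x = 0 := by rw [hkilling]; rfl
      rw [killingForm_apply_apply, LinearMap.trace_eq_matrix_trace ℝ b'] at h0
      simp only [Matrix.trace, Matrix.diag, LinearMap.toMatrix_apply] at h0
      rw [Fintype.sum_sum_type, Fintype.sum_sum_type] at h0
      have hval1 : ∀ i : Unit,
          b'.repr ((LieAlgebra.ad ℝ L x ∘ₗ LieAlgebra.ad ℝ L x) (b' (Sum.inl (Sum.inl i))))
            (Sum.inl (Sum.inl i)) = 0 := by
        intro i
        rw [hb']
        simp only [hf, Sum.elim_inl, LinearMap.comp_apply, LieAlgebra.ad_apply]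
        rw [hecen x, lie_zero]
        simp
      have hval2 : ∀ i : Unit,
          b'.repr ((LieAlgebra.ad ℝ L x ∘ₗ LieAlgebra.ad ℝ L x) (b' (Sum.inl (Sum.inr i))))
            (Sum.inl (Sum.inr i)) = 0 := by
        intro i
        rw [hb', hrepr]
        simp only [hf, hwv, Sum.elim_inl, Sum.elim_inr, LinearMap.comp_apply,
          LieAlgebra.ad_apply]
        exact hBre x ⁅x, d⁆
      have hval3 : ∀ k : Fin m,
          b'.repr ((LieAlgebra.ad ℝ L x ∘ₗ LieAlgebra.ad ℝ L x) (b' (Sum.inr k)))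
            (Sum.inr k) = - B ⁅x, u k⁆ ⁅x, u k⁆ := by
        intro k
        rw [hb', hrepr]
        simp only [hf, hwv, Sum.elim_inr, LinearMap.comp_apply, LieAlgebra.ad_apply]
        rw [hinv]
      simp only [hval1, hval2, hval3, Finset.sum_const_zero, zero_add] at h0
      have hnn : ∀ k ∈ Finset.univ, (0:ℝ) ≤ B ⁅x, u k⁆ ⁅x, u k⁆ := by
        intro k _
        exact P1 _ (hBre x (u k))
      have hzero : ∀ k ∈ Finset.univ, B ⁅x, u k⁆ ⁅x, u k⁆ = 0 := by
        apply (Finset.sum_eq_zero_iff_of_nonneg hnn).mp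
        have := congrArg Neg.neg h0
        simpa [Finset.sum_neg_distrib] using this
      intro k
      exact P2 _ (hBre x (u k)) (hzero k (Finset.mem_univ k))
    have hbr_e : ∀ z : L, (∃ cc : ℝ, z = cc • e) → B z d = 0 → z = 0 := by
      rintro z ⟨cc, rfl⟩ hzd
      rw [map_smul, LinearMap.smul_apply, smul_eq_mul, hed, mul_one] at hzd
      rw [hzd, zero_smul]
    have hF2 : ∀ (x v : L), v ∈ E → ∃ cc : ℝ, ⁅x, v⁆ = cc • e := by
      intro x v hv
      have hsub : Submodule.span ℝ (Set.range u) ≤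
          Submodule.comap (LieAlgebra.ad ℝ L x) (Submodule.span ℝ {e}) := by
        rw [Submodule.span_le]
        rintro _ ⟨k, rfl⟩
        obtain ⟨cc, hcc⟩ := hT x k
        show u k ∈ Submodule.comap ((LieAlgebra.ad ℝ L) x) (Submodule.span ℝ {e})
        rw [Submodule.mem_comap, LieAlgebra.ad_apply, hcc]
        exact Submodule.smul_mem _ _ (Submodule.mem_span_singleton_self e)
      have hin := hsub (hspanE v hv)
      rw [Submodule.mem_comap, LieAlgebra.ad_apply] at hin
      obtain ⟨cc, hcc⟩ := Submodule.mem_span_singleton.mp hin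
      exact ⟨cc, hcc.symm⟩
    have hG1 : ∀ x : L, ⁅x, d⁆ ∈ E := by
      intro x
      have h1 : B ⁅x, d⁆ e = 0 := hBre x d
      have h2 : B ⁅x, d⁆ d = 0 := by
        have h3 := hinv x d d
        rw [hsymm d ⁅x, d⁆] at h3
        linarith
      have h4 := hDC ⁅x, d⁆
      rw [h1, h2] at h4
      simpa using h4
    have hG2 : ∀ v ∈ E, ⁅v, d⁆ = 0 := by
      intro v hv
      obtain ⟨cc, hcc⟩ := hF2 d v hv
      have h2 : ⁅v, d⁆ ∈ E := hG1 v
      have h3 : ⁅d, v⁆ = -⁅v, d⁆ := by rw [← lie_skew]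
      have h4 : B ⁅d, v⁆ d = 0 := by
        rw [h3, map_neg, LinearMap.neg_apply, hEd _ h2, neg_zero]
      have h5 : ⁅d, v⁆ = 0 := hbr_e _ ⟨cc, hcc⟩ h4
      rw [h3] at h5
      exact neg_eq_zero.mp h5
    have hG3 : ∀ y : L, ⁅y, d⁆ = 0 := by
      intro y
      have hy := hDC y
      have hyv : y = (y - B y d • e - B y e • d) + B y d • e + B y e • d := by abel
      rw [hyv, add_lie, add_lie, smul_lie, smul_lie, hG2 _ hy, lie_self, smul_zero,
        add_zero, zero_add]
      have hed0 : ⁅e, d⁆ = 0 := by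
        rw [← lie_skew, hecen d, neg_zero]
      rw [hed0, smul_zero]
    have hfin : ∀ x y2 : L, ⁅x, y2⁆ = 0 := by
      intro x y2
      have hy := hDC y2
      have hyv : y2 = (y2 - B y2 d • e - B y2 e • d) + B y2 d • e + B y2 e • d := by abel
      have h1 : ⁅x, y2⁆ = ⁅x, y2 - B y2 d • e - B y2 e • d⁆ := by
        conv_lhs => rw [hyv]
        rw [lie_add, lie_add, lie_smul, lie_smul, hecen x, smul_zero, add_zero,
          hG3 x, smul_zero, add_zero]
      have h2 := hF2 x _ hy
      have h3 : B ⁅x, y2 - B y2 d • e - B y2 e • d⁆ d = 0 := by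
        rw [hinv, hG3 x, map_zero, neg_zero]
      rw [h1]
      exact hbr_e _ h2 h3
    exact ⟨hfin⟩
  · -- the derived ideal is nondegenerate; use solvability
    push_neg at hiso
    have hres : (B.restrict (W : Submodule ℝ L)).Nondegenerate := by
      refine (LinearMap.IsRefl.nondegenerate_iff_separatingLeft ?_).mpr ?_
      · intro x y h; exact hrefl _ _ h
      rintro ⟨w, hw⟩ hww
      have hw' : w ∈ W := (LieSubmodule.mem_toSubmodule W).mp hw
      by_contra hne
      have hne' : w ≠ 0 := by
        intro h; apply hne; exact Subtype.ext h
      obtain ⟨w', hw'2, hbw⟩ := hiso w hw' hne'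
      exact hbw (hww ⟨w', (LieSubmodule.mem_toSubmodule W).mpr hw'2⟩)
    have hcompl := LinearMap.BilinForm.isCompl_orthogonal_of_restrict_nondegenerate
      (B := B) (W := (W : Submodule ℝ L)) hrefl hres
    have hdecomp : ∀ x : L, ∃ w z : L, w ∈ W ∧ (∀ u : L, ⁅u, z⁆ = 0) ∧ x = w + z := by
      intro x
      have hx : x ∈ (W : Submodule ℝ L) ⊔ B.orthogonal (W : Submodule ℝ L) := by
        rw [hcompl.sup_eq_top]; exact Submodule.mem_top
      obtain ⟨w, hw, z, hz, hsum⟩ := Submodule.mem_sup.mp hx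
      refine ⟨w, z, (LieSubmodule.mem_toSubmodule W).mp hw, ?_, hsum.symm⟩
      apply hWperp_central
      intro w' hw'
      rw [hsymm]
      exact hz w' ((LieSubmodule.mem_toSubmodule W).mpr hw')
    have hWle : W ≤ ⁅W, W⁆ := by
      conv_lhs => rw [hW1]
      rw [LieSubmodule.lie_le_iff]
      intro x _ y _
      obtain ⟨w, z, hw, hz, rfl⟩ := hdecomp x
      obtain ⟨w', z', hw', hz', rfl⟩ := hdecomp y
      have h1 : ⁅w + z, w' + z'⁆ = ⁅w, w'⁆ := by
        have hzw : ⁅z, w' + z'⁆ = 0 := by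
          rw [← lie_skew, hz (w' + z'), neg_zero]
        rw [add_lie, hzw, add_zero, lie_add, hz' w, add_zero]
      rw [h1]
      exact LieSubmodule.lie_mem_lie hw hw'
    have hmono : ∀ k, W ≤ LieAlgebra.derivedSeries ℝ L (k + 1) := by
      intro k
      induction k with
      | zero => rw [← hWdef]
      | succ k ih =>
        calc W ≤ ⁅W, W⁆ := hWle
          _ ≤ ⁅LieAlgebra.derivedSeries ℝ L (k+1), LieAlgebra.derivedSeries ℝ L (k+1)⁆ :=
            LieSubmodule.mono_lie ih ih
          _ = LieAlgebra.derivedSeries ℝ L (k+2) := by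
            conv_rhs => rw [LieAlgebra.derivedSeries_def, LieAlgebra.derivedSeriesOfIdeal_succ,
              ← LieAlgebra.derivedSeries_def]
    obtain ⟨k, hk⟩ := LieAlgebra.IsSolvable.solvable ℝ L
    have hWbot : W = ⊥ := by
      have h1 := hmono k
      have h2 : LieAlgebra.derivedSeries ℝ L (k + 1) = ⊥ := by
        conv_lhs => rw [LieAlgebra.derivedSeries_def, LieAlgebra.derivedSeriesOfIdeal_succ,
          ← LieAlgebra.derivedSeries_def]
        rw [hk]
        exact LieSubmodule.lie_bot _
      rw [h2] at h1
      exact le_bot_iff.mp h1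
    constructor
    intro x y
    have := hmemW x y
    rw [hWbot] at this
    exact (LieSubmodule.mem_bot _).mp this
end

section
/- Let (𝔤, ⟨·,·⟩) be a solvable metric Lie algebra and 𝔫 its nilradical. Then the ideal 𝔧₀ = 𝔷(𝔫) ∩ [𝔤,𝔫] is totally isotropic: ⟨u,v⟩ = 0 for all u, v ∈ 𝔷(𝔫) ∩ [𝔤,𝔫]. -/
/-- In a solvable metric Lie algebra with nilradical `𝔫`, the ideal
`𝔧₀ = 𝔷(𝔫) ∩ [𝔤,𝔫]` is totally isotropic. -/
theorem stmt_12 (L : Type*) [LieRing L] [LieAlgebra ℝ L] [FiniteDimensional ℝ L]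
    [LieAlgebra.IsSolvable L]
    (B : LinearMap.BilinForm ℝ L)
    (hsymm : ∀ x y : L, B x y = B y x)
    (hnondeg : B.Nondegenerate)
    (hinv : ∀ x y z : L, B ⁅x, y⁆ z = - B y ⁅x, z⁆)
    (n : LieIdeal ℝ L)
    (hn_nilp : LieRing.IsNilpotent n)
    (hn_max : ∀ m : LieIdeal ℝ L, LieRing.IsNilpotent m → m ≤ n) :
    ∀ u v : L,
      u ∈ n → (∀ m ∈ n, ⁅u, m⁆ = (0 : L)) →
      u ∈ Submodule.span ℝ {z : L | ∃ x : L, ∃ m ∈ n, z = ⁅x, m⁆} →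
      v ∈ n → (∀ m ∈ n, ⁅v, m⁆ = (0 : L)) →
      v ∈ Submodule.span ℝ {z : L | ∃ x : L, ∃ m ∈ n, z = ⁅x, m⁆} →
      B u v = 0 := by
  intro u v hu hucent huspan hv hvcent hvspan
  have hle : Submodule.span ℝ {z : L | ∃ x : L, ∃ m ∈ n, z = ⁅x, m⁆}
      ≤ LinearMap.ker (B u) := by
    rw [Submodule.span_le]
    rintro z ⟨x, m, hm, rfl⟩
    simp only [SetLike.mem_coe, LinearMap.mem_ker]
    have h1 : B ⁅x, m⁆ u = - B m ⁅x, u⁆ := hinv x m u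
    have h2 : B ⁅u, x⁆ m = - B x ⁅u, m⁆ := hinv u x m
    have h3 : ⁅u, m⁆ = (0 : L) := hucent m hm
    have h4 : ⁅x, u⁆ = -⁅u, x⁆ := (lie_skew x u).symm
    calc B u ⁅x, m⁆ = B ⁅x, m⁆ u := hsymm _ _
      _ = - B m ⁅x, u⁆ := h1
      _ = - B m (-⁅u, x⁆) := by rw [h4]
      _ = B m ⁅u, x⁆ := by rw [map_neg, neg_neg]
      _ = B ⁅u, x⁆ m := hsymm _ _
      _ = - B x ⁅u, m⁆ := h2
      _ = 0 := by rw [h3]; simp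
  exact LinearMap.mem_ker.mp (hle hvspan)
end

section
/- Let (𝔤, ⟨·,·⟩) be a solvable metric Lie algebra and 𝔫 its nilradical. Then 𝔤 is abelian if and only if 𝔷(𝔫) ∩ [𝔤,𝔫] = 0. -/
/-- A solvable metric Lie algebra `𝔤` with nilradical `𝔫` is abelian if and
only if `𝔷(𝔫) ∩ [𝔤,𝔫] = 0`. -/
theorem stmt_13 (L : Type*) [LieRing L] [LieAlgebra ℝ L] [FiniteDimensional ℝ L]
    [LieAlgebra.IsSolvable L]
    (B : LinearMap.BilinForm ℝ L)
    (hsymm : ∀ x y : L, B x y = B y x)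
    (hnondeg : B.Nondegenerate)
    (hinv : ∀ x y z : L, B ⁅x, y⁆ z = - B y ⁅x, z⁆)
    (n : LieIdeal ℝ L)
    (hn_nilp : LieRing.IsNilpotent n)
    (hn_max : ∀ m : LieIdeal ℝ L, LieRing.IsNilpotent m → m ≤ n) :
    IsLieAbelian L ↔
      ∀ u : L,
        u ∈ n → (∀ m ∈ n, ⁅u, m⁆ = (0 : L)) →
        u ∈ Submodule.span ℝ {z : L | ∃ x : L, ∃ m ∈ n, z = ⁅x, m⁆} →
        u = 0 := by
  constructor
  · intro hab u hu hc hspan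
    have hset : {z : L | ∃ x : L, ∃ m ∈ n, z = ⁅x, m⁆} ⊆ ((⊥ : Submodule ℝ L) : Set L) := by
      rintro z ⟨x, m, hm, rfl⟩
      simp [trivial_lie_zero]
    have := Submodule.span_le.mpr hset
    simpa using this hspan
  · intro h
    set J : LieIdeal ℝ L := ⁅(⊤ : LieIdeal ℝ L), n⁆ with hJdef
    let K : ℕ → LieIdeal ℝ L := fun i => Nat.rec J (fun _ Kp => ⁅n, Kp⁆) i
    have hKs : ∀ i, K (i + 1) = ⁅n, K i⁆ := fun i => rfl
    have hKle : ∀ i, K i ≤ n := by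
      intro i; induction i with
      | zero => exact LieSubmodule.lie_le_right n ⊤
      | succ i ih => exact le_trans (LieSubmodule.lie_le_right (K i) n) ih
    have hKleJ : ∀ i, K i ≤ J := by
      intro i; induction i with
      | zero => exact le_rfl
      | succ i ih => exact le_trans (LieSubmodule.lie_le_right (K i) n) ih
    have hJspan : LieSubmodule.toSubmodule J
        = Submodule.span ℝ {z : L | ∃ x : L, ∃ m ∈ n, z = ⁅x, m⁆} := by
      rw [hJdef, LieSubmodule.lieIdeal_oper_eq_linear_span']
      congr 1
      ext z
      constructor
      · rintro ⟨x, -, m, hm, rfl⟩; exact ⟨x, m, hm, rfl⟩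
      · rintro ⟨x, m, hm, rfl⟩; exact ⟨x, trivial, m, hm, rfl⟩
    have hKC : ∀ i, LieSubmodule.toSubmodule (K i) ≤
        Submodule.map (n.incl.toLinearMap)
          (LieSubmodule.toSubmodule (LieModule.lowerCentralSeries ℝ (↥n) (↥n) i)) := by
      intro i; induction i with
      | zero =>
        intro x hx
        exact ⟨⟨x, hKle 0 hx⟩, by simp, rfl⟩
      | succ i ih =>
        rw [hKs i, LieSubmodule.lieIdeal_oper_eq_linear_span']
        refine Submodule.span_le.mpr ?_
        rintro z ⟨x, hx, u, hu, rfl⟩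
        obtain ⟨v, hv, hveq⟩ := ih hu
        refine ⟨⁅(⟨x, hx⟩ : n), v⁆, ?_, ?_⟩
        · rw [LieModule.lowerCentralSeries_succ]
          exact LieSubmodule.lie_mem_lie (LieSubmodule.mem_top _) hv
        · simp only [LieHom.coe_toLinearMap, LieIdeal.incl_apply] at hveq ⊢
          rw [← hveq]
          rfl
    obtain ⟨k0, hk0⟩ := (LieModule.isNilpotent_iff ℝ n n).mp hn_nilp
    have hKbot : K k0 = ⊥ := by
      rw [LieSubmodule.eq_bot_iff]
      intro m hm
      have hmm := hKC k0 hm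
      rw [hk0] at hmm
      simpa using hmm
    have hstep : ∀ i, K (i + 1) = ⊥ → K i = ⊥ := by
      intro i hi
      rw [LieSubmodule.eq_bot_iff]
      intro u hu
      refine h u (hKle i hu) ?_ ?_
      · intro m hm
        have hmem : ⁅m, u⁆ ∈ K (i + 1) := by
          rw [hKs i]; exact LieSubmodule.lie_mem_lie hm hu
        rw [hi, LieSubmodule.mem_bot] at hmem
        rw [← lie_skew, hmem, neg_zero]
      · have hmem : u ∈ LieSubmodule.toSubmodule J := hKleJ i hu
        rwa [hJspan] at hmem
    have hJbot : J = ⊥ := by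
      have hdown : ∀ i, K i = ⊥ → K 0 = ⊥ := by
        intro i
        induction i with
        | zero => exact id
        | succ i ih => exact fun hh => ih (hstep i hh)
      exact hdown k0 hKbot
    have hncen : n ≤ LieAlgebra.center ℝ L := by
      intro m hm
      refine (LieModule.mem_maxTrivSubmodule ℝ L L m).mpr ?_
      intro x
      have hmem : ⁅x, m⁆ ∈ J := LieSubmodule.lie_mem_lie (LieSubmodule.mem_top x) hm
      rwa [hJbot, LieSubmodule.mem_bot] at hmem
    have key : ∀ M : LieIdeal ℝ L, ⁅M, M⁆ ≤ LieAlgebra.center ℝ L →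
        M ≤ LieAlgebra.center ℝ L := by
      intro M hM
      refine le_trans (hn_max M ?_) hncen
      set I : LieIdeal ℝ M := LieIdeal.comap M.incl (LieAlgebra.center ℝ L) with hIdef
      have h₁ : I ≤ LieAlgebra.center ℝ M := by
        intro a ha
        refine (LieModule.mem_maxTrivSubmodule ℝ M M a).mpr ?_
        intro b
        have hcen : (a : L) ∈ LieAlgebra.center ℝ L := by
          rw [hIdef, LieIdeal.mem_comap] at ha
          simpa using ha
        have hz : (↑(⁅b, a⁆ : M) : L) = 0 := by
          have : (↑(⁅b, a⁆ : M) : L) = ⁅(b : L), (a : L)⁆ := rfl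
          rw [this]
          exact (LieModule.mem_maxTrivSubmodule ℝ L L (a : L)).mp hcen b
        exact Subtype.coe_injective (by simpa using hz)
      have habq : IsLieAbelian (M ⧸ I) := by
        constructor
        intro a b
        obtain ⟨a, rfl⟩ := LieSubmodule.Quotient.surjective_mk' I a
        obtain ⟨b, rfl⟩ := LieSubmodule.Quotient.surjective_mk' I b
        have : ⁅a, b⁆ ∈ I := by
          rw [hIdef, LieIdeal.mem_comap]
          have : (↑(⁅a, b⁆ : M) : L) = ⁅(a : L), (b : L)⁆ := rfl
          simpa [this] using hM (LieSubmodule.lie_coe_mem_lie a b)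
        simpa [← LieSubmodule.Quotient.mk_bracket] using
          (LieSubmodule.Quotient.mk_eq_zero' (N := I) (m := ⁅a, b⁆)).mpr this
      haveI := habq
      exact LieAlgebra.nilpotent_of_nilpotent_quotient h₁ inferInstance
    obtain ⟨k, hk⟩ := LieAlgebra.IsSolvable.solvable (R := ℝ) (L := L)
    have hdown : ∀ j, LieAlgebra.derivedSeries ℝ L (k - j) ≤ LieAlgebra.center ℝ L := by
      intro j
      induction j with
      | zero => rw [Nat.sub_zero, hk]; exact bot_le
      | succ j ih =>
        refine key _ (le_trans ?_ ih)
        have h1 : LieAlgebra.derivedSeries ℝ L ((k - (j + 1)) + 1)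
            ≤ LieAlgebra.derivedSeries ℝ L (k - j) := by
          rw [LieAlgebra.derivedSeries_def, LieAlgebra.derivedSeries_def]
          exact LieAlgebra.derivedSeriesOfIdeal_antitone ⊤ (by omega)
        refine le_trans (le_of_eq ?_) h1
        rw [LieAlgebra.derivedSeries_def, LieAlgebra.derivedSeries_def,
          LieAlgebra.derivedSeriesOfIdeal_succ]
    have htop : (⊤ : LieIdeal ℝ L) ≤ LieAlgebra.center ℝ L := by
      have := hdown k
      rwa [Nat.sub_self, LieAlgebra.derivedSeries_def, LieAlgebra.derivedSeriesOfIdeal_zero] at this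
    constructor
    intro x y
    exact (LieModule.mem_maxTrivSubmodule ℝ L L y).mp (htop trivial) x
end

section
/- Let (𝔤, ⟨·,·⟩) be a solvable metric Lie algebra and 𝔫 its nilradical. If 𝔤 is not abelian, then there exists a nonzero ideal 𝔦 of 𝔤 with 𝔦 ⊆ 𝔷(𝔫) ∩ [𝔤,𝔫] and 𝔦 ⊆ 𝔷(𝔤); in particular 𝔦 is a nonzero central ideal of 𝔤 that is totally isotropic. -/
section Aux

variable {L : Type*} [LieRing L] [LieAlgebra ℝ L]

/-- An ideal `I` such that all brackets `⁅a,b⁆` of elements of `I` are central in `L`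
is a nilpotent Lie algebra. -/
lemma aux_nilp_of_bracket_central (I : LieIdeal ℝ L)
    (h : ∀ a b : L, a ∈ I → b ∈ I → ∀ x : L, ⁅x, ⁅a, b⁆⁆ = 0) :
    LieRing.IsNilpotent I := by
  refine (LieModule.isNilpotent_iff ℝ I I).mpr ⟨2, ?_⟩
  have hcent : ∀ m : I, m ∈ LieModule.lowerCentralSeries ℝ I I 1 → ∀ x : L, ⁅x, (m : L)⁆ = 0 := by
    intro m hm
    have h1 : LieModule.lowerCentralSeries ℝ I I 1
        = ⁅(⊤ : LieIdeal ℝ I), (⊤ : LieSubmodule ℝ I I)⁆ := rfl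
    rw [h1, ← LieSubmodule.mem_toSubmodule,
      LieSubmodule.lieIdeal_oper_eq_linear_span'] at hm
    refine Submodule.span_induction ?_ ?_ ?_ ?_ hm
    · rintro m ⟨a, -, b, -, rfl⟩ x
      have hco : ((⁅a, b⁆ : I) : L) = ⁅(a : L), (b : L)⁆ := rfl
      rw [hco]
      exact h a b a.2 b.2 x
    · intro x; simp
    · intro m₁ m₂ _ _ h₁ h₂ x
      have : ((m₁ + m₂ : I) : L) = (m₁ : L) + (m₂ : L) := rfl
      rw [this, lie_add, h₁ x, h₂ x, add_zero]
    · intro t m' _ h' x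
      have : ((t • m' : I) : L) = t • (m' : L) := rfl
      rw [this, lie_smul, h' x, smul_zero]
  have h2 : LieModule.lowerCentralSeries ℝ I I 2
      = ⁅(⊤ : LieIdeal ℝ I), LieModule.lowerCentralSeries ℝ I I 1⁆ := rfl
  rw [h2, LieSubmodule.lie_eq_bot_iff]
  intro x _ m hm
  have : ((⁅x, m⁆ : I) : L) = ⁅(x : L), (m : L)⁆ := rfl
  have hz : ((⁅x, m⁆ : I) : L) = 0 := by rw [this]; exact hcent m hm x
  exact Subtype.ext hz

end Aux

/-- If a solvable metric Lie algebra `𝔤` with nilradical `𝔫` is not abelian,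
then there is a nonzero ideal `𝔦` of `𝔤` with `𝔦 ⊆ 𝔷(𝔫) ∩ [𝔤,𝔫]` and `𝔦 ⊆ 𝔷(𝔤)`; in particular
`𝔦` is a nonzero central ideal that is totally isotropic. -/
theorem stmt_14 (L : Type*) [LieRing L] [LieAlgebra ℝ L] [FiniteDimensional ℝ L]
    [LieAlgebra.IsSolvable L]
    (B : LinearMap.BilinForm ℝ L)
    (hsymm : ∀ x y : L, B x y = B y x)
    (hnondeg : B.Nondegenerate)
    (hinv : ∀ x y z : L, B ⁅x, y⁆ z = - B y ⁅x, z⁆)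
    (n : LieIdeal ℝ L)
    (hn_nilp : LieRing.IsNilpotent n)
    (hn_max : ∀ m : LieIdeal ℝ L, LieRing.IsNilpotent m → m ≤ n)
    (hnotab : ¬ IsLieAbelian L) :
    ∃ i : LieIdeal ℝ L, i ≠ ⊥ ∧
      (∀ u ∈ i,
        u ∈ n ∧ (∀ m ∈ n, ⁅u, m⁆ = (0 : L)) ∧
        u ∈ Submodule.span ℝ {z : L | ∃ x : L, ∃ m ∈ n, z = ⁅x, m⁆}) ∧
      (∀ u ∈ i, ∀ x : L, ⁅x, u⁆ = (0 : L)) ∧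
      (∀ u ∈ i, ∀ v ∈ i, B u v = 0) := by
  classical
  set C : LieIdeal ℝ L := LieAlgebra.center ℝ L with hCdef
  set Dd : LieIdeal ℝ L := ⁅(⊤ : LieIdeal ℝ L), (⊤ : LieIdeal ℝ L)⁆ with hDdef
  set Gn : LieIdeal ℝ L := ⁅(⊤ : LieIdeal ℝ L), n⁆ with hGndef
  have hrefl : B.IsRefl := by
    intro x y h
    rw [hsymm] at h; exact h
  have hmemC : ∀ z : L, z ∈ C ↔ ∀ x : L, ⁅x, z⁆ = 0 := fun z =>
    LieModule.mem_maxTrivSubmodule ℝ L L z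
  -- the center is the orthogonal complement of the derived ideal
  have hCD : C.toSubmodule = B.orthogonal Dd.toSubmodule := by
    ext z
    rw [LieSubmodule.mem_toSubmodule, hmemC, LinearMap.BilinForm.mem_orthogonal_iff]
    constructor
    · intro hz d hd
      rw [LieSubmodule.mem_toSubmodule] at hd
      rw [← LieSubmodule.mem_toSubmodule, LieSubmodule.lieIdeal_oper_eq_linear_span'] at hd
      refine Submodule.span_induction ?_ ?_ ?_ ?_ hd
      · rintro d ⟨x, -, y, -, rfl⟩
        show B ⁅x, y⁆ z = 0
        rw [hinv x y z, hz x, map_zero, neg_zero]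
      · show B 0 z = 0; rw [map_zero]; rfl
      · intro a b _ _ ha hb
        show B (a + b) z = 0
        have ha' : B a z = 0 := ha
        have hb' : B b z = 0 := hb
        rw [map_add, LinearMap.add_apply, ha', hb', add_zero]
      · intro t a _ ha
        show B (t • a) z = 0
        have ha' : B a z = 0 := ha
        rw [map_smul, LinearMap.smul_apply, ha', smul_zero]
    · intro hz x
      apply hnondeg.1
      intro y
      have hxy : ⁅x, y⁆ ∈ Dd.toSubmodule := by
        rw [LieSubmodule.mem_toSubmodule]
        exact LieSubmodule.lie_mem_lie (LieSubmodule.mem_top x) (LieSubmodule.mem_top y)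
      have h0 : B ⁅x, y⁆ z = 0 := hz ⁅x, y⁆ hxy
      have : B ⁅x, z⁆ y = - B z ⁅x, y⁆ := hinv x z y
      rw [this, hsymm z ⁅x, y⁆, h0, neg_zero]
  -- the orthogonal complement of the nilradical
  set W : Submodule ℝ L := B.orthogonal n.toSubmodule with hWdef
  have hmemW : ∀ w : L, w ∈ W ↔ ∀ m ∈ n, B m w = 0 := by
    intro w
    rw [hWdef, LinearMap.BilinForm.mem_orthogonal_iff]
    constructor
    · intro h m hm; exact h m ((LieSubmodule.mem_toSubmodule _).mpr hm)
    · intro h m hm; exact h m ((LieSubmodule.mem_toSubmodule _).mp hm)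
  have hWlie : ∀ (x w : L), w ∈ W → ⁅x, w⁆ ∈ W := by
    intro x w hw
    rw [hmemW] at hw ⊢
    intro m hm
    rw [hsymm, hinv x w m, hsymm]
    rw [hw ⁅x, m⁆ (n.lie_mem hm), neg_zero]
  have hWlie' : ∀ (x w : L), w ∈ W → ⁅w, x⁆ ∈ W := by
    intro x w hw
    have := hWlie x w hw
    rw [← lie_skew]
    exact neg_mem this
  -- the orthogonal complement of [g,n]
  set K : Submodule ℝ L := B.orthogonal Gn.toSubmodule with hKdef
  have hKW : ∀ (x c : L), c ∈ K → ⁅x, c⁆ ∈ K → True := fun _ _ _ _ => trivial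
  have hKtoW : ∀ (x c : L), c ∈ K → ⁅x, c⁆ ∈ W := by
    intro x c hc
    rw [hmemW]
    intro m hm
    rw [hsymm, hinv x c m, hsymm]
    have hxm : ⁅x, m⁆ ∈ Gn.toSubmodule := by
      rw [LieSubmodule.mem_toSubmodule]
      exact LieSubmodule.lie_mem_lie (LieSubmodule.mem_top x) hm
    rw [LinearMap.BilinForm.mem_orthogonal_iff] at hc
    have := hc ⁅x, m⁆ hxm
    rw [this, neg_zero]
  have hKtoW' : ∀ (x c : L), c ∈ K → ⁅c, x⁆ ∈ W := by
    intro x c hc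
    rw [← lie_skew]
    exact neg_mem (hKtoW x c hc)
  -- center is contained in the nilradical
  have hCn : C ≤ n := by
    apply hn_max
    apply aux_nilp_of_bracket_central
    intro a b _ hb x
    have : ⁅a, b⁆ = 0 := (hmemC b).mp hb a
    rw [this, lie_zero]
  -- derived series successor formula
  have hdssucc : ∀ j : ℕ, LieAlgebra.derivedSeries ℝ L (j + 1)
      = ⁅LieAlgebra.derivedSeries ℝ L j, LieAlgebra.derivedSeries ℝ L j⁆ :=
    fun j => LieAlgebra.derivedSeriesOfIdeal_succ ℝ L ⊤ j
  have hds1 : LieAlgebra.derivedSeries ℝ L 1 = Dd := by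
    rw [hdssucc 0]; rfl
  -- main claim: the intersection of the center with [g,n] is nonzero
  have hne : C ⊓ Gn ≠ ⊥ := by
    intro habs
    have habs' : C.toSubmodule ⊓ Gn.toSubmodule = ⊥ := by
      rw [← LieSubmodule.inf_toSubmodule, habs, LieSubmodule.bot_toSubmodule]
    -- orthogonal of a sup
    have horthsup : ∀ U V : Submodule ℝ L,
        B.orthogonal (U ⊔ V) = B.orthogonal U ⊓ B.orthogonal V := by
      intro U V
      ext z
      simp only [Submodule.mem_inf, LinearMap.BilinForm.mem_orthogonal_iff]
      constructor
      · intro h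
        exact ⟨fun u hu => h u (le_sup_left (a := U) (b := V) hu),
          fun v hv => h v (le_sup_right (a := U) (b := V) hv)⟩
      · rintro ⟨h1, h2⟩ y hy
        rcases Submodule.mem_sup.mp hy with ⟨u, hu, v, hv, rfl⟩
        show B (u + v) z = 0
        have e1 : B u z = 0 := h1 u hu
        have e2 : B v z = 0 := h2 v hv
        rw [map_add, LinearMap.add_apply, e1, e2, add_zero]
    have hsup : Dd.toSubmodule ⊔ K = ⊤ := by
      have h1 : B.orthogonal (Dd.toSubmodule ⊔ K) = ⊥ := by
        rw [horthsup, ← hCD, hKdef,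
          LinearMap.BilinForm.orthogonal_orthogonal hnondeg hrefl]
        exact habs'
      calc Dd.toSubmodule ⊔ K
          = B.orthogonal (B.orthogonal (Dd.toSubmodule ⊔ K)) :=
            (LinearMap.BilinForm.orthogonal_orthogonal hnondeg hrefl _).symm
        _ = B.orthogonal ⊥ := by rw [h1]
        _ = ⊤ := LinearMap.BilinForm.orthogonal_bot
    -- key induction: D ≤ ds (k+1) ⊔ W
    have hkey : ∀ k : ℕ, Dd.toSubmodule ≤
        (LieAlgebra.derivedSeries ℝ L (k + 1)).toSubmodule ⊔ W := by
      intro k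
      induction k with
      | zero => rw [hds1]; exact le_sup_left
      | succ k ih =>
        have hspan : Dd.toSubmodule = Submodule.span ℝ
            {m : L | ∃ x ∈ (⊤ : LieIdeal ℝ L), ∃ y ∈ (⊤ : LieIdeal ℝ L), ⁅x, y⁆ = m} := by
          rw [hDdef]; exact LieSubmodule.lieIdeal_oper_eq_linear_span' ..
        rw [hspan, Submodule.span_le]
        rintro _ ⟨x, -, y, -, rfl⟩
        have hx : x ∈ Dd.toSubmodule ⊔ K := hsup.symm ▸ Submodule.mem_top
        have hy : y ∈ Dd.toSubmodule ⊔ K := hsup.symm ▸ Submodule.mem_top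
        obtain ⟨d, hd, c, hc, rfl⟩ := Submodule.mem_sup.mp hx
        obtain ⟨d', hd', c', hc', rfl⟩ := Submodule.mem_sup.mp hy
        set T := (LieAlgebra.derivedSeries ℝ L (k + 2)).toSubmodule ⊔ W with hTdef
        have hWT : W ≤ T := le_sup_right
        -- decompose d, d' using ih
        obtain ⟨p, hp, w, hw, hdw⟩ := Submodule.mem_sup.mp (ih hd)
        obtain ⟨p', hp', w', hw', hdw'⟩ := Submodule.mem_sup.mp (ih hd')
        have h1 : ⁅d, d'⁆ ∈ T := by
          rw [← hdw, ← hdw', add_lie, lie_add]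
          refine add_mem (add_mem ?_ ?_) ?_
          · apply le_sup_left (a := (LieAlgebra.derivedSeries ℝ L (k + 2)).toSubmodule) (b := W)
            rw [LieSubmodule.mem_toSubmodule, hdssucc (k + 1)]
            exact LieSubmodule.lie_mem_lie ((LieSubmodule.mem_toSubmodule _).mp hp)
              ((LieSubmodule.mem_toSubmodule _).mp hp')
          · exact hWT (hWlie p w' hw')
          · exact hWT (hWlie' (p' + w') w hw)
        have h2 : ⁅d, c'⁆ ∈ T := hWT (hKtoW d c' hc')
        have h3 : ⁅c, d' + c'⁆ ∈ T := hWT (hKtoW' (d' + c') c hc)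
        show ⁅d + c, d' + c'⁆ ∈ T
        rw [add_lie, lie_add]
        exact add_mem (add_mem h1 h2) h3
    -- solvability: D ≤ W
    obtain ⟨k0, hk0⟩ := LieAlgebra.IsSolvable.solvable ℝ L
    have hDW : Dd.toSubmodule ≤ W := by
      have := hkey k0
      rw [hdssucc k0, hk0] at this
      rw [LieSubmodule.lie_bot] at this
      rwa [LieSubmodule.bot_toSubmodule, bot_sup_eq] at this
    -- hence n ≤ C
    have hnC : n.toSubmodule ≤ C.toSubmodule := by
      intro z hz
      rw [hCD, LinearMap.BilinForm.mem_orthogonal_iff]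
      intro d hd
      have hdW := hDW hd
      rw [hmemW] at hdW
      show B d z = 0
      rw [hsymm]
      exact hdW z ((LieSubmodule.mem_toSubmodule _).mp hz)
    -- downward induction on the derived series
    have hstep : ∀ j : ℕ,
        (LieAlgebra.derivedSeries ℝ L (j + 1)).toSubmodule ≤ C.toSubmodule →
        (LieAlgebra.derivedSeries ℝ L j).toSubmodule ≤ C.toSubmodule := by
      intro j hj
      have hnilp : LieRing.IsNilpotent (LieAlgebra.derivedSeries ℝ L j) := by
        apply aux_nilp_of_bracket_central
        intro a b ha hb x
        have hab : ⁅a, b⁆ ∈ LieAlgebra.derivedSeries ℝ L (j + 1) := by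
          rw [hdssucc j]
          exact LieSubmodule.lie_mem_lie ha hb
        have : ⁅a, b⁆ ∈ C := (LieSubmodule.mem_toSubmodule _).mp
          (hj ((LieSubmodule.mem_toSubmodule _).mpr hab))
        exact (hmemC _).mp this x
      have hle := hn_max _ hnilp
      intro z hz
      exact hnC ((LieSubmodule.mem_toSubmodule _).mpr (hle ((LieSubmodule.mem_toSubmodule _).mp hz)))
    have hdown : ∀ j : ℕ,
        (LieAlgebra.derivedSeries ℝ L (k0 - j)).toSubmodule ≤ C.toSubmodule := by
      intro j
      induction j with
      | zero =>
        rw [Nat.sub_zero, hk0, LieSubmodule.bot_toSubmodule]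
        exact bot_le
      | succ j ih =>
        by_cases hj : j + 1 ≤ k0
        · have h1 : k0 - j = (k0 - (j + 1)) + 1 := by omega
          rw [h1] at ih
          exact hstep _ ih
        · have h1 : k0 - (j + 1) = k0 - j := by omega
          rw [h1]; exact ih
      -- conclude
    have htop := hdown k0
    rw [Nat.sub_self] at htop
    apply hnotab
    constructor
    intro x y
    have hy : y ∈ C := by
      have : y ∈ (LieAlgebra.derivedSeries ℝ L 0).toSubmodule := by
        rw [LieSubmodule.mem_toSubmodule]
        exact LieSubmodule.mem_top y
      exact (LieSubmodule.mem_toSubmodule _).mp (htop this)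
    exact (hmemC y).mp hy x
  -- now build the ideal
  refine ⟨C ⊓ Gn, hne, ?_, ?_, ?_⟩
  · intro u hu
    obtain ⟨huC, huG⟩ := (LieSubmodule.mem_inf _ _ _).mp hu
    refine ⟨?_, ?_, ?_⟩
    · have hGn_le_n : Gn ≤ n := LieSubmodule.lie_le_right n ⊤
      exact hGn_le_n huG
    · intro m _
      rw [← lie_skew, (hmemC u).mp huC m, neg_zero]
    · have hGspan : Gn.toSubmodule = Submodule.span ℝ
          {m : L | ∃ x ∈ (⊤ : LieIdeal ℝ L), ∃ y ∈ n, ⁅x, y⁆ = m} := by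
        rw [hGndef]; exact LieSubmodule.lieIdeal_oper_eq_linear_span' ..
      have h1 : u ∈ Gn.toSubmodule := (LieSubmodule.mem_toSubmodule _).mpr huG
      rw [hGspan] at h1
      have hmono : Submodule.span ℝ
          {m : L | ∃ x ∈ (⊤ : LieIdeal ℝ L), ∃ y ∈ n, ⁅x, y⁆ = m} ≤
          Submodule.span ℝ {z : L | ∃ x : L, ∃ m ∈ n, z = ⁅x, m⁆} := by
        rw [Submodule.span_le]
        rintro _ ⟨x, -, m, hm, rfl⟩
        exact Submodule.subset_span ⟨x, m, hm, rfl⟩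
      exact hmono h1
  · intro u hu x
    obtain ⟨huC, _⟩ := (LieSubmodule.mem_inf _ _ _).mp hu
    exact (hmemC u).mp huC x
  · intro u hu v hv
    obtain ⟨huC, _⟩ := (LieSubmodule.mem_inf _ _ _).mp hu
    obtain ⟨_, hvG⟩ := (LieSubmodule.mem_inf _ _ _).mp hv
    have hGn_le_D : Gn ≤ Dd := by
      rw [hGndef, hDdef]
      exact LieSubmodule.mono_lie_right ⊤ le_top
    have hvD : v ∈ Dd.toSubmodule := (LieSubmodule.mem_toSubmodule _).mpr (hGn_le_D hvG)
    have huC' : u ∈ B.orthogonal Dd.toSubmodule := by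
      rw [← hCD]
      exact (LieSubmodule.mem_toSubmodule _).mpr huC
    rw [LinearMap.BilinForm.mem_orthogonal_iff] at huC'
    rw [hsymm]
    exact huC' v hvD
end

section
/- Let 𝔤 be a finite-dimensional real Lie algebra that is the direct sum 𝔤 = 𝔨 ⊕ 𝔰 of two ideals 𝔨 and 𝔰, where 𝔰 is semisimple. Let ⟨·,·⟩ be a symmetric bilinear form on 𝔤 that is invariant under 𝔰, i.e. ⟨[s,x],y⟩ = −⟨x,[s,y]⟩ for all s ∈ 𝔰 and x,y ∈ 𝔤, and suppose the radical 𝔤^⊥ = {x ∈ 𝔤 : ⟨x,y⟩ = 0 for all y ∈ 𝔤} contains no nonzero ideal of 𝔤. Then 𝔤^⊥ ⊆ 𝔨; in particular 𝔰 ∩ 𝔤^⊥ = 0. -/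
/-- Let `𝔤 = 𝔨 ⊕ 𝔰` be a direct sum of ideals with `𝔰` semisimple, and let
`⟨·,·⟩` be a symmetric bilinear form invariant under `𝔰` whose radical `𝔤^⊥` contains no
nonzero ideal of `𝔤`. Then `𝔤^⊥ ⊆ 𝔨`; in particular `𝔰 ∩ 𝔤^⊥ = 0`. -/
theorem stmt_16 (L : Type*) [LieRing L] [LieAlgebra ℝ L] [FiniteDimensional ℝ L]
    (k s : LieIdeal ℝ L)
    (hinf : k ⊓ s = ⊥) (hsup : k ⊔ s = ⊤)
    (hss : LieAlgebra.HasTrivialRadical ℝ s)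
    (B : LinearMap.BilinForm ℝ L)
    (hsymm : ∀ x y : L, B x y = B y x)
    (hinv : ∀ z ∈ s, ∀ x y : L, B ⁅z, x⁆ y = - B x ⁅z, y⁆)
    (hrad : ∀ I : LieIdeal ℝ L, (∀ x ∈ I, ∀ y : L, B x y = 0) → I = ⊥) :
    (∀ x : L, (∀ y : L, B x y = 0) → x ∈ k) ∧
    (∀ x : L, x ∈ s → (∀ y : L, B x y = 0) → x = 0) := by
  -- decomposition of any element
  have hdecomp : ∀ x : L, ∃ a ∈ k, ∃ b ∈ s, x = a + b := by
    intro x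
    have hx : x ∈ k ⊔ s := by rw [hsup]; trivial
    rw [LieSubmodule.mem_sup] at hx
    obtain ⟨a, ha, b, hb, hab⟩ := hx
    exact ⟨a, ha, b, hb, hab.symm⟩
  -- brackets between k and s vanish
  have hks : ∀ a ∈ k, ∀ b ∈ s, ⁅a, b⁆ = 0 := by
    intro a ha b hb
    have h1 : ⁅a, b⁆ ∈ k ⊓ s := by
      constructor
      · show ⁅a, b⁆ ∈ k
        rw [← lie_skew]
        exact neg_mem (k.lie_mem ha)
      · exact s.lie_mem hb
    rw [hinf] at h1
    exact h1
  -- the key ideal: s ∩ radical B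
  set I : LieIdeal ℝ L :=
    { carrier := {m : L | m ∈ s ∧ ∀ y : L, B m y = 0}
      add_mem' := by
        rintro m n ⟨hm1, hm2⟩ ⟨hn1, hn2⟩
        exact ⟨s.add_mem hm1 hn1, fun y => by simp [hm2 y, hn2 y]⟩
      zero_mem' := ⟨s.zero_mem, fun y => by simp⟩
      smul_mem' := by
        rintro c m ⟨hm1, hm2⟩
        exact ⟨s.smul_mem c hm1, fun y => by simp [hm2 y]⟩
      lie_mem := by
        rintro x m ⟨hm1, hm2⟩
        obtain ⟨a, ha, b, hb, rfl⟩ := hdecomp x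
        have h0 : ⁅a + b, m⁆ = ⁅b, m⁆ := by
          rw [add_lie, hks a ha m hm1, zero_add]
        refine ⟨?_, ?_⟩
        · show ⁅a + b, m⁆ ∈ s
          rw [h0]
          exact s.lie_mem hm1
        · intro y
          show B ⁅a + b, m⁆ y = 0
          rw [h0, hinv b hb m y, hm2, neg_zero] } with hI
  have hIbot : I = ⊥ := hrad I (fun x hx y => hx.2 y)
  have hIzero : ∀ m : L, m ∈ s → (∀ y : L, B m y = 0) → m = 0 := by
    intro m hm1 hm2
    have : m ∈ I := ⟨hm1, hm2⟩
    rwa [hIbot, LieSubmodule.mem_bot] at this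
  refine ⟨?_, hIzero⟩
  intro x hx
  obtain ⟨a, ha, b, hb, rfl⟩ := hdecomp x
  -- show b is central in s
  have hcentral : ∀ z ∈ s, ⁅z, b⁆ = 0 := by
    intro z hz
    have h1 : ⁅z, a + b⁆ = ⁅z, b⁆ := by
      rw [lie_add]
      have : ⁅a, z⁆ = 0 := hks a ha z hz
      rw [← lie_skew, this, neg_zero, zero_add]
    apply hIzero
    · rw [← h1]
      show ⁅z, a + b⁆ ∈ s
      rw [← lie_skew]
      exact neg_mem (s.lie_mem hz)
    · intro y
      rw [← h1, hinv z hz (a + b) y, hx, neg_zero]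
  -- b is in the center of s, hence zero
  have hb0 : b = 0 := by
    set c : s := ⟨b, hb⟩ with hc
    have hcc : c ∈ LieAlgebra.center ℝ s := by
      intro z
      ext
      show (⁅z, c⁆ : L) = (0 : L)
      have : (⁅z, c⁆ : L) = ⁅(z : L), (c : L)⁆ := rfl
      rw [this]
      exact hcentral z z.2
    rw [LieAlgebra.center_eq_bot, LieSubmodule.mem_bot] at hcc
    exact congrArg Subtype.val hcc
  rw [hb0, add_zero]
  exact ha
end

section
/- Let (𝔤, ⟨·,·⟩) be a metric Lie algebra and a ∈ 𝔤 an element such that ad(a) is not nilpotent and trace(ad(a)²) = 0. Let ad(a) = S + N be the Jordan–Chevalley decomposition of ad(a), with S semisimple, N nilpotent and SN = NS. Then the subspace W₁ = im(S) satisfies dim W₁ ≥ 4, the restriction of ⟨·,·⟩ to W₁ is nondegenerate, and W₁ contains a nonzero vector v with ⟨v,v⟩ = 0 (so the restriction of ⟨·,·⟩ to W₁ is indefinite). -/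
open Module Polynomial

section Aux

variable {L : Type*} [AddCommGroup L] [Module ℝ L] [FiniteDimensional ℝ L]

/-- Uniqueness of the semisimple part in a Jordan–Chevalley decomposition. -/
lemma jc_unique (s₁ n₁ s₂ n₂ : Module.End ℝ L)
    (hs₁ : s₁.IsSemisimple) (hn₁ : IsNilpotent n₁) (hc₁ : Commute s₁ n₁)
    (hs₂ : s₂.IsSemisimple) (hn₂ : IsNilpotent n₂) (hc₂ : Commute s₂ n₂)
    (h : s₁ + n₁ = s₂ + n₂) : s₁ = s₂ := by
  obtain ⟨n₀, hn₀mem, s₀, hs₀mem, hn₀, hs₀, hf⟩ :=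
    Module.End.exists_isNilpotent_isSemisimple (f := s₁ + n₁)
  have key : ∀ s n : Module.End ℝ L, s.IsSemisimple → IsNilpotent n → Commute s n →
      s + n = s₁ + n₁ → s = s₀ := by
    intro s n hs hn hc hsum
    have hcf : Commute s (s₁ + n₁) := by
      rw [← hsum]; exact (Commute.refl s).add_right hc
    have hcs₀ : Commute s s₀ :=
      Algebra.commute_of_mem_adjoin_singleton_of_commute hs₀mem hcf
    have hcnf : Commute n (s₁ + n₁) := by
      rw [← hsum]; exact hc.symm.add_right (Commute.refl n)
    have hcn₀ : Commute n n₀ :=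
      Algebra.commute_of_mem_adjoin_singleton_of_commute hn₀mem hcnf
    have hss : (s - s₀).IsSemisimple :=
      Module.End.IsSemisimple.sub_of_commute hcs₀ hs hs₀
    have hnil : IsNilpotent (n₀ - n) := (hcn₀.symm).isNilpotent_sub hn₀ hn
    have heq : s - s₀ = n₀ - n := by
      have h2 : s + n = n₀ + s₀ := hsum.trans hf
      abel_nf
      abel_nf at h2
      linear_combination (norm := abel_nf) h2
    rw [heq] at hss
    have h0 := Module.End.eq_zero_of_isNilpotent_isSemisimple hnil hss
    rw [← heq] at h0
    exact sub_eq_zero.mp h0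
  rw [key s₁ n₁ hs₁ hn₁ hc₁ rfl, key s₂ n₂ hs₂ hn₂ hc₂ h.symm]

end Aux

section Adj

variable {L : Type*} [AddCommGroup L] [Module ℝ L] [FiniteDimensional ℝ L]
variable (B : LinearMap.BilinForm ℝ L) (hB : B.Nondegenerate)

/-- The adjoint of an endomorphism with respect to a nondegenerate bilinear form. -/
noncomputable def adjB (f : Module.End ℝ L) : Module.End ℝ L :=
  ((B.toDual hB).symm.toLinearMap) ∘ₗ f.dualMap ∘ₗ (B.toDual hB).toLinearMap

lemma adjB_apply (f : Module.End ℝ L) (x y : L) :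
    B (adjB B hB f x) y = B x (f y) :=
  LinearMap.BilinForm.apply_toDual_symm_apply (hB := hB) (f.dualMap (B.toDual hB x)) y

lemma adjB_unique (f g : Module.End ℝ L) (h : ∀ x y, B (g x) y = B x (f y)) :
    g = adjB B hB f := by
  ext x
  have hz : ∀ y, B (g x - adjB B hB f x) y = 0 := by
    intro y
    rw [map_sub, LinearMap.sub_apply, h, adjB_apply, sub_self]
  have := hB.1 _ hz
  rwa [sub_eq_zero] at this

lemma adjB_zero : adjB B hB 0 = 0 := by
  refine (adjB_unique B hB 0 0 fun x y => by simp).symm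

lemma adjB_add (f g : Module.End ℝ L) :
    adjB B hB (f + g) = adjB B hB f + adjB B hB g := by
  refine (adjB_unique B hB (f + g) _ fun x y => ?_).symm
  simp [map_add, adjB_apply]

lemma adjB_smul (c : ℝ) (f : Module.End ℝ L) :
    adjB B hB (c • f) = c • adjB B hB f := by
  refine (adjB_unique B hB (c • f) _ fun x y => ?_).symm
  simp [adjB_apply]

lemma adjB_mul (f g : Module.End ℝ L) :
    adjB B hB (f * g) = adjB B hB g * adjB B hB f := by
  refine (adjB_unique B hB (f * g) _ fun x y => ?_).symm
  simp [Module.End.mul_apply, adjB_apply]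

lemma adjB_one : adjB B hB 1 = 1 := by
  refine (adjB_unique B hB 1 1 fun x y => by simp).symm

lemma adjB_pow (f : Module.End ℝ L) (n : ℕ) :
    adjB B hB (f ^ n) = (adjB B hB f) ^ n := by
  induction n with
  | zero => simpa using adjB_one B hB
  | succ n ih =>
    rw [pow_succ, adjB_mul, ih, ← pow_succ']

lemma adjB_aeval (f : Module.End ℝ L) (p : ℝ[X]) :
    adjB B hB (aeval f p) = aeval (adjB B hB f) p := by
  induction p using Polynomial.induction_on' with
  | add p q hp hq => rw [map_add, adjB_add, hp, hq, map_add]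
  | monomial n c =>
    simp only [aeval_monomial, Module.algebraMap_end_eq_smul_id, smul_mul_assoc, adjB_smul]
    congr 1
    rw [show (LinearMap.id : Module.End ℝ L) * f ^ n = f ^ n from one_mul _, adjB_pow]
    exact (one_mul _).symm

lemma adjB_isSemisimple (f : Module.End ℝ L) (hf : f.IsSemisimple) :
    (adjB B hB f).IsSemisimple := by
  refine Module.End.isSemisimple_of_squarefree_aeval_eq_zero hf.minpoly_squarefree ?_
  rw [← adjB_aeval, minpoly.aeval, adjB_zero]

lemma adjB_isNilpotent (f : Module.End ℝ L) (hf : IsNilpotent f) :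
    IsNilpotent (adjB B hB f) := by
  obtain ⟨n, hn⟩ := hf
  exact ⟨n, by rw [← adjB_pow, hn, adjB_zero]⟩

end Adj

section KerRange

variable {L : Type*} [AddCommGroup L] [Module ℝ L] [FiniteDimensional ℝ L]

/-- For a semisimple endomorphism, an element of `ker ⊓ range` is zero. -/
lemma semisimple_ker_range (S : Module.End ℝ L) (hS : S.IsSemisimple)
    (x : L) (hk : S x = 0) (hr : ∃ y, S y = x) : x = 0 := by
  set m := minpoly ℝ S with hm
  have sf : Squarefree m := hS.minpoly_squarefree
  by_cases hdvd : X ∣ m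
  · obtain ⟨q, hq⟩ := hdvd
    have hXq : ¬ X ∣ q := by
      intro ⟨r, hr'⟩
      have : (X * X) ∣ m := ⟨r, by rw [hq, hr']; ring⟩
      exact Polynomial.not_isUnit_X (sf X this)
    have hcop : IsCoprime X q := (Polynomial.irreducible_X.coprime_iff_not_dvd).mpr hXq
    obtain ⟨u, v, huv⟩ := hcop
    have hq0 : (aeval S) q x = 0 := by
      obtain ⟨y, hy⟩ := hr
      have hmul : (aeval S) q * S = 0 := by
        have hqX : q * X = m := by rw [hq]; ring
        have h2 : (aeval S) q * S = (aeval S) (q * X) := by rw [map_mul, aeval_X]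
        rw [h2, hqX, hm, minpoly.aeval]
      calc (aeval S) q x = ((aeval S) q * S) y := by rw [Module.End.mul_apply, hy]
        _ = 0 := by rw [hmul]; rfl
    have h1 : (aeval S) (u * X + v * q) = 1 := by rw [huv, map_one]
    have := congrArg (fun g : Module.End ℝ L => g x) h1
    simp only [map_add, map_mul, aeval_X, LinearMap.add_apply, Module.End.mul_apply,
      hk, hq0, map_zero, add_zero, Module.End.one_apply] at this
    exact this.symm
  · have hcop : IsCoprime X m := (Polynomial.irreducible_X.coprime_iff_not_dvd).mpr hdvd
    obtain ⟨u, v, huv⟩ := hcop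
    have h1 : (aeval S) (u * X + v * m) = 1 := by rw [huv, map_one]
    have := congrArg (fun g : Module.End ℝ L => g x) h1
    simp only [map_add, map_mul, aeval_X, hm, minpoly.aeval, mul_zero, LinearMap.add_apply,
      Module.End.mul_apply, hk, map_zero, add_zero, LinearMap.zero_apply,
      Module.End.one_apply] at this
    exact this.symm

end KerRange
section MatrixAux

open Matrix in
lemma aux_fin2 (A : Matrix (Fin 2) (Fin 2) ℝ) (h1 : A.trace = 0) (h2 : (A * A).trace = 0) :
    A.det = 0 := by
  rw [Matrix.trace_fin_two] at h1
  rw [Matrix.trace_fin_two, Matrix.mul_apply, Matrix.mul_apply, Fin.sum_univ_two,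
    Fin.sum_univ_two] at h2
  rw [Matrix.det_fin_two]
  nlinarith [h1, h2]

open Matrix in
lemma aux_matrix {ι : Type*} [Fintype ι] [DecidableEq ι] (M A : Matrix ι ι ℝ)
    (hM : M.det ≠ 0) (hA : A.det ≠ 0) (hsk : Aᵀ * M = -(M * A)) (htr2 : (A * A).trace = 0) :
    Even (Fintype.card ι) ∧ Fintype.card ι ≠ 2 := by
  have hdet : A.det * M.det = (-1) ^ (Fintype.card ι) * (M.det * A.det) := by
    have h := congrArg Matrix.det hsk
    rwa [Matrix.det_mul, Matrix.det_transpose, Matrix.det_neg, Matrix.det_mul] at h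
  have heven : Even (Fintype.card ι) := by
    rw [← neg_one_pow_eq_one_iff_even (R := ℝ) (by norm_num)]
    have h1 : (-1 : ℝ) ^ (Fintype.card ι) * (M.det * A.det) = 1 * (M.det * A.det) := by
      rw [← hdet]; ring
    exact mul_right_cancel₀ (mul_ne_zero hM hA) h1
  refine ⟨heven, ?_⟩
  intro h2
  have hMu : IsUnit M.det := isUnit_iff_ne_zero.mpr hM
  have hAT : Aᵀ = -(M * A) * M⁻¹ := by
    rw [← hsk, Matrix.mul_assoc, Matrix.mul_nonsing_inv M hMu, Matrix.mul_one]
  have htrA : A.trace = 0 := by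
    have h1 : A.trace = Aᵀ.trace := (Matrix.trace_transpose A).symm
    rw [hAT] at h1
    have h3 : (-(M * A) * M⁻¹).trace = -A.trace := by
      rw [Matrix.neg_mul, Matrix.trace_neg, Matrix.trace_mul_comm, ← Matrix.mul_assoc,
        Matrix.nonsing_inv_mul M hMu, Matrix.one_mul]
    rw [h3] at h1
    linarith
  -- reindex to Fin 2
  let e : ι ≃ Fin 2 := Fintype.equivFinOfCardEq h2
  set A' := A.submatrix e.symm e.symm with hA'
  have htrsub : ∀ (C : Matrix ι ι ℝ), (C.submatrix e.symm e.symm).trace = C.trace := by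
    intro C
    simp only [Matrix.trace, Matrix.diag, Matrix.submatrix_apply]
    exact Equiv.sum_comp e.symm (fun j => C j j)
  have hmul : A' * A' = (A * A).submatrix e.symm e.symm := by
    rw [hA', Matrix.submatrix_mul_equiv]
  have hd0 : A'.det = 0 := by
    refine aux_fin2 A' ?_ ?_
    · rw [hA', htrsub, htrA]
    · rw [hmul, htrsub, htr2]
  have : A'.det = A.det := Matrix.det_submatrix_equiv_self e.symm A
  rw [this] at hd0
  exact hA hd0

end MatrixAux

section Expand

variable {L : Type*} [AddCommGroup L] [Module ℝ L]

lemma expandB (B : LinearMap.BilinForm ℝ L) {W : Submodule ℝ L} {n : ℕ}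
    (b : Basis (Fin n) ℝ W) (x : W) (y : L) :
    B (x : L) y = ∑ j, b.repr x j * B (b j : L) y := by
  have hx : (x : L) = ∑ j, b.repr x j • (b j : L) := by
    have h := congrArg (W.subtype) (b.sum_repr x)
    simpa [map_sum, map_smul, -Basis.sum_repr] using h.symm
  rw [hx]
  simp [map_sum, LinearMap.sum_apply, map_smul, LinearMap.smul_apply, smul_eq_mul]

lemma expandB' (B : LinearMap.BilinForm ℝ L) {W : Submodule ℝ L} {n : ℕ}
    (b : Basis (Fin n) ℝ W) (x : W) (y : L) :
    B y (x : L) = ∑ j, b.repr x j * B y (b j : L) := by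
  have hx : (x : L) = ∑ j, b.repr x j • (b j : L) := by
    have h := congrArg (W.subtype) (b.sum_repr x)
    simpa [map_sum, map_smul, -Basis.sum_repr] using h.symm
  rw [hx]
  simp [map_sum, map_smul, smul_eq_mul]

end Expand
lemma quad_root (c β γ : ℝ) (hc : 0 < c) (hγ : γ < 0) :
    ∃ t : ℝ, c + 2 * β * t + γ * t ^ 2 = 0 := by
  have hγ' : γ ≠ 0 := ne_of_lt hγ
  have hnn : (0:ℝ) ≤ β ^ 2 - γ * c := by nlinarith
  set s := Real.sqrt (β ^ 2 - γ * c) with hs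
  have hs2 : s ^ 2 = β ^ 2 - γ * c := Real.sq_sqrt hnn
  refine ⟨(-β + s) / γ, ?_⟩
  have expand : c + 2 * β * ((-β + s) / γ) + γ * ((-β + s) / γ) ^ 2
      = (c * γ + 2 * β * (-β + s) + (-β + s) ^ 2) / γ := by
    field_simp
  rw [expand]
  have hz : c * γ + 2 * β * (-β + s) + (-β + s) ^ 2 = 0 := by linear_combination hs2
  rw [hz, zero_div]

/-- Let `(𝔤, ⟨·,·⟩)` be a metric Lie algebra and `a ∈ 𝔤` with `ad(a)` not
nilpotent and `trace(ad(a)²) = 0`. If `ad(a) = S + N` is the Jordan–Chevalley decomposition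
(`S` semisimple, `N` nilpotent, `SN = NS`), then `W₁ = im S` satisfies `dim W₁ ≥ 4`, the
restriction of `⟨·,·⟩` to `W₁` is nondegenerate, and `W₁` contains a nonzero isotropic vector. -/
theorem stmt_17 (L : Type*) [LieRing L] [LieAlgebra ℝ L] [FiniteDimensional ℝ L]
    (B : LinearMap.BilinForm ℝ L)
    (hsymm : ∀ x y : L, B x y = B y x)
    (hnondeg : B.Nondegenerate)
    (hinv : ∀ x y z : L, B ⁅x, y⁆ z = - B y ⁅x, z⁆)
    (a : L)
    (ha : ¬ IsNilpotent (LieAlgebra.ad ℝ L a))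
    (htr : LinearMap.trace ℝ L (LieAlgebra.ad ℝ L a ∘ₗ LieAlgebra.ad ℝ L a) = 0)
    (S N : Module.End ℝ L)
    (hS : S.IsSemisimple)
    (hN : IsNilpotent N)
    (hcomm : Commute S N)
    (hSN : LieAlgebra.ad ℝ L a = S + N) :
    4 ≤ Module.finrank ℝ (LinearMap.range S) ∧
    (∀ v ∈ LinearMap.range S, (∀ w ∈ LinearMap.range S, B v w = 0) → v = 0) ∧
    (∃ v ∈ LinearMap.range S, v ≠ 0 ∧ B v v = 0) := by
  -- skewness of ad a
  set D := LieAlgebra.ad ℝ L a with hD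
  have hskewD : ∀ x y : L, B (D x) y = -B x (D y) := by
    intro x y
    simpa [hD, LieAlgebra.ad_apply] using hinv a x y
  -- adjoint of D is -D
  have hadjD : adjB B hnondeg D = -D := by
    refine (adjB_unique B hnondeg D (-D) fun x y => ?_).symm
    rw [LinearMap.neg_apply, map_neg, LinearMap.neg_apply, hskewD, neg_neg]
  -- S is skew
  have hadjS : adjB B hnondeg S = -S := by
    refine jc_unique (adjB B hnondeg S) (adjB B hnondeg N) (-S) (-N)
      (adjB_isSemisimple B hnondeg S hS) (adjB_isNilpotent B hnondeg N hN) ?_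
      ((Module.End.isSemisimple_neg).mpr hS) hN.neg (hcomm.neg_left.neg_right) ?_
    · show adjB B hnondeg S * adjB B hnondeg N = adjB B hnondeg N * adjB B hnondeg S
      rw [← adjB_mul, ← adjB_mul, hcomm.eq]
    · rw [← adjB_add, ← hSN, hadjD, hSN, neg_add]
  have hskewS : ∀ x y : L, B (S x) y = -B x (S y) := by
    intro x y
    have h := adjB_apply B hnondeg S x y
    rw [hadjS, LinearMap.neg_apply, map_neg, LinearMap.neg_apply] at h
    linarith [h]
  -- kernel/range
  have hkr : ∀ x : L, S x = 0 → x ∈ LinearMap.range S → x = 0 := by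
    intro x hx hxr
    exact semisimple_ker_range S hS x hx hxr
  have hdisj : Disjoint (LinearMap.ker S) (LinearMap.range S) := by
    rw [Submodule.disjoint_def]
    intro x hx1 hx2
    exact hkr x (LinearMap.mem_ker.mp hx1) hx2
  have hsup : LinearMap.ker S ⊔ LinearMap.range S = ⊤ := by
    refine Submodule.eq_top_of_disjoint _ _ ?_ hdisj
    rw [add_comm]
    exact (LinearMap.finrank_range_add_finrank_ker S).ge
  -- bullet 2: nondegeneracy on W
  have bullet2 : ∀ v ∈ LinearMap.range S, (∀ w ∈ LinearMap.range S, B v w = 0) → v = 0 := by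
    intro v hv hall
    apply hnondeg.1
    intro z
    have hz : z ∈ LinearMap.ker S ⊔ LinearMap.range S := by rw [hsup]; trivial
    obtain ⟨zk, hzk, zr, hzr, rfl⟩ := Submodule.mem_sup.mp hz
    obtain ⟨x, rfl⟩ := hv
    rw [map_add]
    have h1 : B (S x) zk = 0 := by
      rw [hskewS, LinearMap.mem_ker.mp hzk, map_zero, neg_zero]
    rw [h1, hall zr hzr, add_zero]
  -- the restriction of S to W := range S
  have hmemW : ∀ x : L, S x ∈ LinearMap.range S := fun x => LinearMap.mem_range_self S x
  set W := LinearMap.range S with hW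
  set S' : Module.End ℝ W := S.restrict (fun x _ => hmemW x) with hS'
  have hS'apply : ∀ x : W, (S' x : L) = S (x : L) := fun x => rfl
  have hS'inj : Function.Injective S' := by
    rw [← LinearMap.ker_eq_bot, Submodule.eq_bot_iff]
    intro x hx
    have hx0 : S (x : L) = 0 := by
      have h := congrArg (Subtype.val) (LinearMap.mem_ker.mp hx)
      rwa [hS'apply] at h
    exact Subtype.ext (hkr (x : L) hx0 x.2)
  -- trace of S'²  on W is zero
  have htrW : LinearMap.trace ℝ W (S' * S') = 0 := by
    have htrL : LinearMap.trace ℝ L (S * S) = 0 := by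
      have hexp : D * D = S * S + (S * N + (N * S + N * N)) := by rw [hSN]; noncomm_ring
      have t1 : LinearMap.trace ℝ L (S * N) = 0 :=
        (LinearMap.isNilpotent_trace_of_isNilpotent (hcomm.isNilpotent_mul_left hN)).eq_zero
      have t2 : LinearMap.trace ℝ L (N * S) = 0 :=
        (LinearMap.isNilpotent_trace_of_isNilpotent (hcomm.symm.isNilpotent_mul_right hN)).eq_zero
      have t3 : LinearMap.trace ℝ L (N * N) = 0 :=
        (LinearMap.isNilpotent_trace_of_isNilpotent
          ((Commute.refl N).isNilpotent_mul_right hN)).eq_zero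
      have h : LinearMap.trace ℝ L (D * D) = 0 := htr
      rw [hexp, map_add, map_add, map_add, t1, t2, t3] at h
      simpa using h
    have key := LinearMap.trace_comp_comm'
      (W.subtype ∘ₗ (S.rangeRestrict ∘ₗ W.subtype)) S.rangeRestrict
    have e1 : S.rangeRestrict ∘ₗ (W.subtype ∘ₗ (S.rangeRestrict ∘ₗ W.subtype)) = S' * S' := by
      ext x
      rfl
    have e2 : (W.subtype ∘ₗ (S.rangeRestrict ∘ₗ W.subtype)) ∘ₗ S.rangeRestrict = S * S := by
      ext x
      rfl
    rw [e1, e2] at key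
    rw [key, htrL]
  -- matrix setup
  set d := Module.finrank ℝ W with hd
  let b : Basis (Fin d) ℝ W := Module.finBasis ℝ W
  set Am : Matrix (Fin d) (Fin d) ℝ := LinearMap.toMatrix b b S' with hAm
  set Mm : Matrix (Fin d) (Fin d) ℝ := Matrix.of (fun i j => B (b i : L) (b j : L)) with hMm
  have hMmapp : ∀ i j, Mm i j = B (b i : L) (b j : L) := fun i j => rfl
  have hAmapp : ∀ i j, Am i j = b.repr (S' (b j)) i := fun i j => LinearMap.toMatrix_apply b b S' i j
  have hskmat : Am.transpose * Mm = -(Mm * Am) := by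
    ext i j
    have l : (Am.transpose * Mm) i j = B (S (b i : L)) (b j : L) := by
      rw [Matrix.mul_apply, ← hS'apply (b i), expandB B b (S' (b i)) (b j : L)]
      refine Finset.sum_congr rfl fun k _ => ?_
      rw [Matrix.transpose_apply, hAmapp, hMmapp]
    have r : (Mm * Am) i j = B (b i : L) (S (b j : L)) := by
      rw [Matrix.mul_apply, ← hS'apply (b j), expandB' B b (S' (b j)) (b i : L)]
      refine Finset.sum_congr rfl fun k _ => ?_
      rw [hAmapp, hMmapp, mul_comm]
    rw [Matrix.neg_apply, l, r]
    exact hskewS _ _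
  have hdetM : Mm.det ≠ 0 := by
    intro hdet0
    obtain ⟨v, hv0, hvM⟩ := Matrix.exists_vecMul_eq_zero_iff.mpr hdet0
    set x : W := b.equivFun.symm v with hx
    have hx0 : x ≠ 0 := by
      intro h
      apply hv0
      have h2 := congrArg b.equivFun h
      rwa [hx, b.equivFun.apply_symm_apply, map_zero] at h2
    have hrepr : ∀ k, b.repr x k = v k := by
      intro k
      rw [← Basis.equivFun_apply, hx, b.equivFun.apply_symm_apply]
    have hBx : ∀ j, B (x : L) (b j : L) = 0 := by
      intro j
      rw [expandB B b x (b j : L)]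
      have : ∀ k, b.repr x k * B (b k : L) (b j : L) = v k * Mm k j := by
        intro k
        rw [hrepr, hMmapp]
      rw [Finset.sum_congr rfl fun k _ => this k]
      have hvm := congrFun hvM j
      rw [Matrix.vecMul, dotProduct] at hvm
      simpa using hvm
    have hxall : ∀ w ∈ W, B (x : L) w = 0 := by
      intro w hw
      have : B (x : L) ((⟨w, hw⟩ : W) : L) = 0 := by
        rw [expandB' B b ⟨w, hw⟩ (x : L)]
        exact Finset.sum_eq_zero fun j _ => by rw [hBx j, mul_zero]
      simpa using this
    exact hx0 (Submodule.coe_eq_zero.mp (bullet2 (x : L) x.2 hxall))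
  have hdetA : Am.det ≠ 0 := by
    have hbij : Function.Bijective S' := ⟨hS'inj, (LinearMap.injective_iff_surjective).mp hS'inj⟩
    have hdet : LinearMap.det S' ≠ 0 := by
      have h := (LinearEquiv.ofBijective S' hbij).isUnit_det'
      have e : ((LinearEquiv.ofBijective S' hbij) : W →ₗ[ℝ] W) = S' := rfl
      rw [e] at h
      exact h.ne_zero
    rw [hAm, LinearMap.det_toMatrix]
    exact hdet
  have htrAm : (Am * Am).trace = 0 := by
    rw [hAm, ← LinearMap.toMatrix_mul, ← LinearMap.trace_eq_matrix_trace ℝ b]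
    exact htrW
  obtain ⟨heven, hne2⟩ := aux_matrix Mm Am hdetM hdetA hskmat htrAm
  rw [Fintype.card_fin] at heven hne2
  have hSne : S ≠ 0 := by
    intro h0
    apply ha
    rw [hSN, h0, zero_add]
    exact hN
  have hd0 : d ≠ 0 := by
    intro h0
    apply hSne
    have hWbot : W = ⊥ := Submodule.finrank_eq_zero.mp (by rw [← hd, h0])
    ext x
    have hx : S x ∈ W := hmemW x
    rw [hWbot, Submodule.mem_bot] at hx
    simpa using hx
  have hge4 : 4 ≤ d := by
    obtain ⟨k, hk⟩ := heven
    omega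
  refine ⟨hge4, bullet2, ?_⟩
  -- bullet 3 : isotropic vector
  by_contra hiso
  push_neg at hiso
  -- all nonzero vectors of W have B-squares of the same sign
  have key : ∀ u ∈ W, ∀ w ∈ W, 0 < B u u → B w w < 0 → False := by
    intro u hu w hw hc hww
    obtain ⟨t, htq⟩ : ∃ t : ℝ, B u u + 2 * B u w * t + B w w * t ^ 2 = 0 :=
      quad_root (B u u) (B u w) (B w w) hc hww
    have hBv : B (u + t • w) (u + t • w) = B u u + 2 * B u w * t + B w w * t ^ 2 := by
      simp only [map_add, map_smul, LinearMap.add_apply, LinearMap.smul_apply, smul_eq_mul]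
      rw [hsymm w u]
      ring
    have hvne : u + t • w ≠ 0 := by
      intro h0
      have hu' : u = -(t • w) := eq_neg_of_add_eq_zero_left h0
      have hBuu : B u u = t ^ 2 * B w w := by
        rw [hu']
        simp only [map_neg, map_smul, LinearMap.neg_apply, LinearMap.smul_apply, smul_eq_mul]
        ring
      nlinarith [sq_nonneg t]
    exact hiso (u + t • w) (W.add_mem hu (W.smul_mem t hw)) hvne (hBv.trans htq)
  have hsign : ∀ u ∈ W, ∀ w ∈ W, u ≠ 0 → w ≠ 0 → 0 < B u u * B w w := by
    intro u hu w hw hu0 hw0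
    have h1 : B u u ≠ 0 := hiso u hu hu0
    have h2 : B w w ≠ 0 := hiso w hw hw0
    rcases lt_or_gt_of_ne h1 with hu1 | hu1 <;> rcases lt_or_gt_of_ne h2 with hw1 | hw1
    · exact mul_pos_of_neg_of_neg hu1 hw1
    · exact absurd (key w hw u hu hw1 hu1) not_false
    · exact absurd (key u hu w hw hu1 hw1) not_false
    · exact mul_pos hu1 hw1
  -- orthogonal basis of W
  haveI : Invertible (2 : ℝ) := invertibleOfNonzero two_ne_zero
  set B' : LinearMap.BilinForm ℝ W := B.compl₁₂ W.subtype W.subtype with hB'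
  have hB'apply : ∀ x y : W, B' x y = B (x : L) (y : L) := fun x y => rfl
  have hB'symm : LinearMap.IsSymm B' := by
    constructor
    intro x y
    rw [RingHom.id_apply, hB'apply, hB'apply, hsymm]
  obtain ⟨v, hv⟩ := LinearMap.BilinForm.exists_orthogonal_basis hB'symm
  have horth : ∀ i j, i ≠ j → B (v i : L) (v j : L) = 0 := by
    intro i j hij
    exact hv hij
  have hvne0 : ∀ i, (v i : L) ≠ 0 := by
    intro i h0
    exact v.ne_zero i (Submodule.coe_eq_zero.mp h0)
  have hBvv : ∀ i, B (v i : L) (v i : L) ≠ 0 := fun i => hiso _ (v i).2 (hvne0 i)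
  have hrepr2 : ∀ (x : W) (i), v.repr x i * B (v i : L) (v i : L) = B (x : L) (v i : L) := by
    intro x i
    rw [expandB B v x (v i : L), Finset.sum_eq_single i]
    · intro k _ hk
      rw [horth k i hk, mul_zero]
    · intro h
      exact absurd (Finset.mem_univ i) h
  have htr_expr : LinearMap.trace ℝ W (S' * S') =
      ∑ i, B (S (S (v i : L))) (v i : L) / B (v i : L) (v i : L) := by
    rw [LinearMap.trace_eq_matrix_trace ℝ v]
    unfold Matrix.trace Matrix.diag
    refine Finset.sum_congr rfl fun i _ => ?_
    rw [LinearMap.toMatrix_apply, eq_div_iff (hBvv i)]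
    have h := hrepr2 ((S' * S') (v i)) i
    have e : (((S' * S') (v i) : W) : L) = S (S (v i : L)) := rfl
    rwa [e] at h
  have hneg : ∀ i, B (S (S (v i : L))) (v i : L) / B (v i : L) (v i : L) < 0 := by
    intro i
    have h1 : B (S (S (v i : L))) (v i : L) = -(B (S (v i : L)) (S (v i : L))) := by
      rw [hskewS, hsymm]
    have hSv_mem : S (v i : L) ∈ W := hmemW _
    have hSv_ne : S (v i : L) ≠ 0 := by
      intro h0
      have h2 : S' (v i) = 0 := Subtype.ext (by rw [hS'apply]; exact h0)
      exact v.ne_zero i (hS'inj (by rw [h2, map_zero]))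
    have hpos := hsign (S (v i : L)) hSv_mem (v i : L) (v i).2 hSv_ne (hvne0 i)
    rw [h1, neg_div]
    have hdivpos : 0 < B (S (v i : L)) (S (v i : L)) / B (v i : L) (v i : L) := by
      rcases mul_pos_iff.mp hpos with ⟨ha1, ha2⟩ | ⟨ha1, ha2⟩
      · exact div_pos ha1 ha2
      · exact div_pos_of_neg_of_neg ha1 ha2
    linarith
  have hlt : LinearMap.trace ℝ W (S' * S') < 0 := by
    rw [htr_expr]
    haveI hfne : Nonempty (Fin (Module.finrank ℝ W)) := ⟨⟨0, by rw [← hd]; omega⟩⟩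
    have hne : (Finset.univ : Finset (Fin (Module.finrank ℝ W))).Nonempty := Finset.univ_nonempty
    calc ∑ i, B (S (S (v i : L))) (v i : L) / B (v i : L) (v i : L)
        < ∑ _i, (0 : ℝ) := Finset.sum_lt_sum_of_nonempty hne (fun i _ => hneg i)
      _ = 0 := Finset.sum_const_zero
  rw [htrW] at hlt
  exact lt_irrefl 0 hlt
end
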